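/- arXiv:2006.06470 — 10 statements merged into one kernel-verified Lean document; each statement's English description precedes it below -/
import Mathlib

section
/- Let G be a locally compact Polish abelian topological group and let H be a subgroup of G which is a Borel set and whose index in G is at most countable. Then H is open in G. -/
open MeasureTheory Pointwise

/-- Let `G` be a locally compact Polish abelian topological group and let
`H` be a subgroup of `G` which is a Borel set and whose index in `G` is at most countable.
Then `H` is open in `G`. -/
theorem borel_subgroup_of_countable_index_isOpen
    {G : Type*} [CommGroup G] [TopologicalSpace G] [IsTopologicalGroup G]
    [LocallyCompactSpace G] [PolishSpace G]
    [MeasurableSpace G] [BorelSpace G]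
    (H : Subgroup G) (hBorel : MeasurableSet (H : Set G))
    (hIndex : Countable (G ⧸ H)) :
    IsOpen (H : Set G) := by
  let μ : Measure G := Measure.haar
  have hμpos : 0 < μ (H : Set G) := by
    by_contra h
    push_neg at h
    have hH0 : μ (H : Set G) = 0 := le_antisymm h (zero_le)
    have hcover : (Set.univ : Set G) ⊆ ⋃ q : G ⧸ H, (Quotient.out q) • (H : Set G) := by
      intro g _
      refine Set.mem_iUnion.2 ⟨QuotientGroup.mk g, ?_⟩
      have : (QuotientGroup.mk (Quotient.out (QuotientGroup.mk g : G ⧸ H)) : G ⧸ H)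
          = QuotientGroup.mk g := Quotient.out_eq' _
      rw [QuotientGroup.eq] at this
      refine ⟨(Quotient.out (QuotientGroup.mk g : G ⧸ H))⁻¹ * g, this, by simp [smul_eq_mul]⟩
    have huniv : μ (Set.univ : Set G) = 0 := by
      refine measure_mono_null hcover (measure_iUnion_null fun q => ?_)
      rw [measure_smul]
      exact hH0
    have : μ (Set.univ : Set G) ≠ 0 :=
      (isOpen_univ.measure_ne_zero μ Set.univ_nonempty)
    exact this huniv
  have hnhds : (H : Set G) / (H : Set G) ∈ nhds (1 : G) :=
    MeasureTheory.Measure.div_mem_nhds_one_of_haar_pos μ (H : Set G) hBorel hμpos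
  have hsub : (H : Set G) / (H : Set G) ⊆ (H : Set G) := by
    rintro x ⟨a, ha, b, hb, rfl⟩
    exact H.div_mem ha hb
  exact Subgroup.isOpen_of_mem_nhds H (Filter.mem_of_superset hnhds hsub)
end

section
/- Let H be a compact abelian Hausdorff topological group (written additively), let n ≥ 1, and let φ : ℝⁿ → H be a Borel measurable map. Suppose there exists r > 0 such that, writing W = B(0, r) for the open Euclidean ball of radius r around 0, one has φ(v + w) = φ(v) + φ(w) for all v, w ∈ W. Then there exists a group homomorphism φ̃ : ℝⁿ → H such that φ̃(w) = φ(w) for every w ∈ W. -/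
/-- Let `H` be a compact abelian Hausdorff topological group (written
additively), let `n ≥ 1`, and let `φ : ℝⁿ → H` be a Borel measurable map.  Suppose there is
`r > 0` such that, writing `W = B(0, r)` for the open Euclidean ball of radius `r` around
`0`, one has `φ (v + w) = φ v + φ w` for all `v, w ∈ W`.  Then there is a group
homomorphism `φ̃ : ℝⁿ → H` agreeing with `φ` on `W`. -/
theorem lift_of_local_homomorphism_on_ball
    {H : Type*} [AddCommGroup H] [TopologicalSpace H] [IsTopologicalAddGroup H]
    [CompactSpace H] [T2Space H] [MeasurableSpace H] [BorelSpace H]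
    {n : ℕ} (hn : 1 ≤ n)
    (φ : EuclideanSpace ℝ (Fin n) → H) (hmeas : Measurable φ)
    {r : ℝ} (hr : 0 < r)
    (hadd : ∀ v w : EuclideanSpace ℝ (Fin n),
      v ∈ Metric.ball (0 : EuclideanSpace ℝ (Fin n)) r →
      w ∈ Metric.ball (0 : EuclideanSpace ℝ (Fin n)) r →
      φ (v + w) = φ v + φ w) :
    ∃ ψ : EuclideanSpace ℝ (Fin n) →+ H,
      ∀ w ∈ Metric.ball (0 : EuclideanSpace ℝ (Fin n)) r, ψ w = φ w := by
  have hball : ∀ v : EuclideanSpace ℝ (Fin n), ‖v‖ < r →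
      v ∈ Metric.ball (0 : EuclideanSpace ℝ (Fin n)) r := by
    intro v hv; simpa [Metric.mem_ball, dist_zero_right] using hv
  have h0 : φ 0 = 0 := by
    have := hadd 0 0 (hball 0 (by simpa using hr)) (hball 0 (by simpa using hr))
    simp only [add_zero] at this
    exact (left_eq_add.mp this)
  -- φ of a multiple
  have hmul : ∀ (l : ℕ) (u : EuclideanSpace ℝ (Fin n)), ‖u‖ * l < r →
      φ (l • u) = l • φ u := by
    intro l
    induction l with
    | zero => intro u _; simp [h0]
    | succ l ih =>
      intro u h
      have hle : (l : ℝ) ≤ (l + 1 : ℕ) := by push_cast; linarith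
      have hl : ‖u‖ * l < r :=
        lt_of_le_of_lt (mul_le_mul_of_nonneg_left hle (norm_nonneg u)) h
      have hu : ‖u‖ < r := by
        have : ‖u‖ * 1 ≤ ‖u‖ * (l + 1 : ℕ) := by
          apply mul_le_mul_of_nonneg_left _ (norm_nonneg u)
          push_cast; linarith
        simpa using lt_of_le_of_lt (by simpa using this) h
      have hlu : ‖(l • u : EuclideanSpace ℝ (Fin n))‖ < r := by
        rw [← Nat.cast_smul_eq_nsmul ℝ, norm_smul]
        simpa [Real.norm_of_nonneg (Nat.cast_nonneg l), mul_comm] using hl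
      rw [succ_nsmul, hadd _ _ (hball _ hlu) (hball _ hu), ih u hl, succ_nsmul]
  -- independence of the scaling parameter
  have hind : ∀ (k l : ℕ) (v : EuclideanSpace ℝ (Fin n)), 0 < k → 0 < l →
      ‖v‖ < k * r → ‖v‖ < l * r →
      k • φ ((k : ℝ)⁻¹ • v) = l • φ ((l : ℝ)⁻¹ • v) := by
    intro k l v hk hl hkv hlv
    set u : EuclideanSpace ℝ (Fin n) := ((k * l : ℕ) : ℝ)⁻¹ • v with hu
    have hk0 : (k : ℝ) ≠ 0 := Nat.cast_ne_zero.mpr hk.ne'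
    have hl0 : (l : ℝ) ≠ 0 := Nat.cast_ne_zero.mpr hl.ne'
    have hnu : ‖u‖ = ‖v‖ / (k * l) := by
      rw [hu, norm_smul]
      have : (0:ℝ) < (k:ℝ) * l := by positivity
      push_cast
      rw [Real.norm_of_nonneg (by positivity)]
      field_simp
    have h1 : (k : ℝ)⁻¹ • v = l • u := by
      rw [hu, ← Nat.cast_smul_eq_nsmul ℝ, smul_smul]
      congr 1
      push_cast
      field_simp
    have h2 : (l : ℝ)⁻¹ • v = k • u := by
      rw [hu, ← Nat.cast_smul_eq_nsmul ℝ, smul_smul]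
      congr 1
      push_cast
      field_simp [mul_comm]
    have hul : ‖u‖ * l < r := by
      rw [hnu]
      rw [div_mul_eq_mul_div, div_lt_iff₀ (by positivity)]
      push_cast
      calc ‖v‖ * l < (k * r) * l := by
            apply mul_lt_mul_of_pos_right hkv; exact_mod_cast hl
        _ = r * (k * l) := by ring
    have huk : ‖u‖ * k < r := by
      rw [hnu]
      rw [div_mul_eq_mul_div, div_lt_iff₀ (by positivity)]
      push_cast
      calc ‖v‖ * k < (l * r) * k := by
            apply mul_lt_mul_of_pos_right hlv; exact_mod_cast hk
        _ = r * (k * l) := by ring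
    rw [h1, h2, hmul l u hul, hmul k u huk, smul_smul, smul_smul, mul_comm]
  -- the extension
  set N : EuclideanSpace ℝ (Fin n) → ℕ := fun v => ⌊‖v‖ / r⌋₊ + 1 with hN
  have hNv : ∀ v, ‖v‖ < (N v) * r := by
    intro v
    have := Nat.lt_floor_add_one (‖v‖ / r)
    rw [div_lt_iff₀ hr] at this
    simpa [hN] using this
  set f : EuclideanSpace ℝ (Fin n) → H :=
    fun v => (N v) • φ (((N v : ℕ) : ℝ)⁻¹ • v) with hf
  have hfk : ∀ (k : ℕ) (v), 0 < k → ‖v‖ < k * r →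
      f v = k • φ ((k : ℝ)⁻¹ • v) := by
    intro k v hk hkv
    exact hind (N v) k v (Nat.succ_pos _) hk (hNv v) hkv
  have hfadd : ∀ v w, f (v + w) = f v + f w := by
    intro v w
    set k : ℕ := ⌊(‖v‖ + ‖w‖) / r⌋₊ + 1 with hk
    have hk0 : 0 < k := Nat.succ_pos _
    have hksum : ‖v‖ + ‖w‖ < k * r := by
      have := Nat.lt_floor_add_one ((‖v‖ + ‖w‖) / r)
      rw [div_lt_iff₀ hr] at this
      simpa [hk] using this
    have hkv : ‖v‖ < k * r := lt_of_le_of_lt (by linarith [norm_nonneg w]) hksum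
    have hkw : ‖w‖ < k * r := lt_of_le_of_lt (by linarith [norm_nonneg v]) hksum
    have hkvw : ‖v + w‖ < k * r :=
      lt_of_le_of_lt (norm_add_le v w) hksum
    have hk0' : (k : ℝ) ≠ 0 := Nat.cast_ne_zero.mpr hk0.ne'
    have hnvball : ‖(k : ℝ)⁻¹ • v‖ < r := by
      rw [norm_smul, Real.norm_of_nonneg (by positivity)]
      rw [inv_mul_lt_iff₀ (by exact_mod_cast hk0), mul_comm] at *
      exact hkv
    have hnwball : ‖(k : ℝ)⁻¹ • w‖ < r := by
      rw [norm_smul, Real.norm_of_nonneg (by positivity)]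
      rw [inv_mul_lt_iff₀ (by exact_mod_cast hk0), mul_comm] at *
      exact hkw
    rw [hfk k v hk0 hkv, hfk k w hk0 hkw, hfk k (v + w) hk0 hkvw]
    rw [smul_add ((k:ℝ)⁻¹) v w, hadd _ _ (hball _ hnvball) (hball _ hnwball),
      smul_add]
  refine ⟨AddMonoidHom.mk' f hfadd, ?_⟩
  intro w hw
  have hw' : ‖w‖ < r := by simpa [Metric.mem_ball, dist_zero_right] using hw
  have := hfk 1 w one_pos (by simpa using hw')
  simpa using this
end

section
/- Let G be a countable discrete abelian group, let X be an ergodic G-system, let d ≥ 0, and let q : G × X → S¹ be a measurable cocycle that is also a phase polynomial of degree < d. Then for every g ∈ G of finite order n, one has q(g, x)^(n^d) = 1 for μ-almost every x ∈ X. -/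
open MeasureTheory
open scoped symmDiff

noncomputable instance : MeasurableSpace Circle := borel Circle
instance : BorelSpace Circle := ⟨rfl⟩

/-- `φ : X → H` is a phase polynomial of degree `< k` with respect to the action `T` of `G`
on the measure space `(X, μ)`: all `k`-fold multiplicative derivatives
`Δ_{h₁} ⋯ Δ_{h_k} φ` equal `1` almost everywhere, where `Δ_g φ = (φ ∘ T_g) · φ⁻¹`. -/
def PhasePoly {G X H : Type*} [MeasurableSpace X] [CommGroup H]
    (T : G → X → X) (μ : Measure X) : ℕ → (X → H) → Prop
  | 0, φ => ∀ᵐ x ∂μ, φ x = 1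
  | (k + 1), φ => ∀ g : G, PhasePoly T μ k (fun x => φ (T g x) * (φ x)⁻¹)

/-- The action `T` of `G` on `(X, μ)` is ergodic: every measurable set that is invariant
modulo null sets under every `T g` has measure `0` or `1`. -/
def IsErgodicAction {G X : Type*} [MeasurableSpace X] (T : G → X → X)
    (μ : Measure X) : Prop :=
  ∀ A : Set X, MeasurableSet A → (∀ g : G, μ ((T g ⁻¹' A) ∆ A) = 0) → μ A = 0 ∨ μ A = 1

/-- Let `G` be a countable discrete abelian group, `X` an ergodic
`G`-system, `d ≥ 0`, and `q : G × X → S¹` a measurable cocycle that is also a phase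
polynomial of degree `< d`.  Then for every `g ∈ G` of finite order `n`, one has
`q (g, x) ^ (n ^ d) = 1` for almost every `x`. -/
theorem phase_polynomial_cocycle_values
    {G : Type*} [AddCommGroup G] [Countable G]
    {X : Type*} [MeasurableSpace X] (μ : Measure X) [IsProbabilityMeasure μ]
    (T : G → X → X)
    (hT : ∀ g, MeasurePreserving (T g) μ μ)
    (hT0 : T 0 = id) (hTadd : ∀ g g', T (g + g') = T g ∘ T g')
    (herg : IsErgodicAction T μ)
    (d : ℕ) (q : G → X → Circle)
    (hqmeas : ∀ g, Measurable (q g))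
    (hcoc : ∀ g g', ∀ᵐ x ∂μ, q (g + g') x = q g x * q g' (T g x))
    (hpoly : ∀ g, PhasePoly T μ d (q g))
    (g : G) (n : ℕ) (hn : addOrderOf g = n) (hn0 : 0 < n) :
    ∀ᵐ x ∂μ, (q g x) ^ (n ^ d) = 1 := by
  -- a.e. pullback along measure preserving maps
  have hae : ∀ (f : X → X), MeasurePreserving f μ μ → ∀ {p : X → Prop},
      (∀ᵐ x ∂μ, p x) → ∀ᵐ x ∂μ, p (f x) :=
    fun f hf _ hp => hf.quasiMeasurePreserving.ae hp
  -- iterates of T g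
  have hiter : ∀ k : ℕ, T (k • g) = (T g)^[k] := by
    intro k
    induction k with
    | zero => simpa using hT0
    | succ k ih => rw [succ_nsmul, hTadd, ih, ← Function.iterate_succ]
  -- the cocycle product formula, for an arbitrary cocycle
  have hprodgen : ∀ (r : G → X → Circle),
      (∀ a b, ∀ᵐ x ∂μ, r (a + b) x = r a x * r b (T a x)) →
      ∀ᵐ x ∂μ, ∏ j ∈ Finset.range n, r g ((T g)^[j] x) = 1 := by
    intro r hrcoc
    have hr0 : ∀ᵐ x ∂μ, r 0 x = 1 := by
      filter_upwards [hrcoc 0 0] with x hx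
      simp only [add_zero, hT0, id_eq] at hx
      exact left_eq_mul.mp hx
    have hprod : ∀ k : ℕ, ∀ᵐ x ∂μ, r (k • g) x = ∏ j ∈ Finset.range k, r g ((T g)^[j] x) := by
      intro k
      induction k with
      | zero => simpa using hr0
      | succ k ih =>
          filter_upwards [hrcoc (k • g) g, ih] with x h1 h2
          rw [succ_nsmul, h1, h2, Finset.prod_range_succ, hiter k]
    have h1 : (n : ℕ) • g = 0 := by rw [← hn]; exact addOrderOf_nsmul_eq_zero g
    filter_upwards [hprod n, hr0] with x h2 h3
    rw [← h2, h1, h3]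
  clear hn hn0
  induction d generalizing q with
  | zero =>
      filter_upwards [hpoly g] with x hx
      simp [hx]
  | succ d ih =>
      set F : X → Circle := fun x => (q g x) ^ (n ^ d) with hF
      have hFmeas : Measurable F := (hqmeas g).pow_const _
      -- the differenced cocycle and the inductive hypothesis
      have hinv : ∀ h : G, ∀ᵐ x ∂μ, F (T h x) = F x := by
        intro h
        have key := ih (fun a x => q a (T h x) * (q a x)⁻¹)
          (fun a => ((hqmeas a).comp (hT h).measurable).mul (hqmeas a).inv)
          (fun a b => by
            have hcomm : T a ∘ T h = T h ∘ T a := by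
              rw [← hTadd, ← hTadd, add_comm]
            filter_upwards [hcoc a b, hae (T h) (hT h) (hcoc a b)] with x h1 h2
            have h3 : T a (T h x) = T h (T a x) := congrFun hcomm x
            rw [h2, h1, h3]
            simp [mul_assoc, mul_comm, mul_left_comm, mul_inv])
          (fun a => hpoly a h)
        filter_upwards [key] with x hx
        have h4 : (q g (T h x) * (q g x)⁻¹) ^ (n ^ d) = 1 := hx
        rw [mul_pow, inv_pow] at h4
        have h5 := mul_inv_eq_one.mp h4
        simpa [hF] using h5
      -- zero-one law for preimages of F
      have key : ∀ U : Set Circle, MeasurableSet U →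
          (∀ᵐ x ∂μ, F x ∈ U) ∨ (∀ᵐ x ∂μ, F x ∉ U) := by
        intro U hU
        have h01 : μ (F ⁻¹' U) = 0 ∨ μ (F ⁻¹' U) = 1 := by
          apply herg _ (hFmeas hU)
          intro h
          have hnull : μ {x | ¬ F (T h x) = F x} = 0 := by
            rw [← ae_iff]; exact hinv h
          refine measure_mono_null ?_ hnull
          intro x hx
          simp only [Set.mem_symmDiff, Set.mem_preimage, Set.mem_setOf_eq] at hx ⊢
          rcases hx with ⟨h1, h2⟩ | ⟨h1, h2⟩
          · exact fun he => h2 (by rwa [he] at h1)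
          · exact fun he => h2 (by rwa [← he] at h1)
        rcases h01 with h0 | h1
        · right
          rw [ae_iff]
          simp only [not_not]
          exact h0
        · left
          have h2 := (prob_compl_eq_zero_iff (μ := μ) (hFmeas hU)).mpr h1
          rw [ae_iff]
          exact h2
      -- ergodicity: F is a.e. constant
      obtain ⟨c, hc⟩ : ∃ c : Circle, F =ᵐ[μ] fun _ => c :=
        Filter.exists_eventuallyEq_const_of_forall_separating
          (l := ae μ) (f := F) MeasurableSet key
      -- F ∘ (T g)^[j] = c a.e., for all j
      have hcall : ∀ᵐ x ∂μ, ∀ j : ℕ, F ((T g)^[j] x) = c := by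
        rw [ae_all_iff]
        intro j
        exact hae ((T g)^[j]) ((hT g).iterate j) hc
      filter_upwards [hprodgen q hcoc, hcall, hc] with x h1 h2 h3
      have hcn : c ^ n = 1 := by
        calc c ^ n = ∏ j ∈ Finset.range n, F ((T g)^[j] x) := by
              rw [Finset.prod_congr rfl fun j _ => h2 j]
              simp
          _ = (∏ j ∈ Finset.range n, q g ((T g)^[j] x)) ^ (n ^ d) := by
              rw [Finset.prod_pow]
          _ = 1 := by rw [h1]; simp
      calc (q g x) ^ (n ^ (d + 1)) = ((q g x) ^ (n ^ d)) ^ n := by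
            rw [← pow_mul, pow_succ]
        _ = c ^ n := congrArg (· ^ n) h3
        _ = 1 := hcn
end

section
/- Let G be a countable discrete abelian group, let X be an ergodic G-system, let d ≥ 1, and let u : X → X be a measure-preserving transformation that commutes with the G-action (u ∘ T_g = T_g ∘ u μ-a.e. for every g ∈ G). If P : X → S¹ is a phase polynomial of degree < d, then Δ_u P := (P ∘ u) · conj(P) is a phase polynomial of degree < d − 1. -/
open MeasureTheory
open scoped symmDiff

/-- PhasePoly respects a.e. equality (for measure-preserving actions). -/
lemma phasePoly_congr {G X : Type*} [MeasurableSpace X] {μ : Measure X}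
    {T : G → X → X} (hT : ∀ g, MeasurePreserving (T g) μ μ) :
    ∀ (k : ℕ) (φ ψ : X → Circle), φ =ᵐ[μ] ψ → PhasePoly T μ k φ → PhasePoly T μ k ψ := by
  intro k
  induction k with
  | zero =>
    intro φ ψ h hφ
    exact hφ.congr (by filter_upwards [h] with x hx using by rw [hx])
  | succ k ih =>
    intro φ ψ h hφ g
    refine ih _ _ ?_ (hφ g)
    have h1 : (fun x => φ (T g x)) =ᵐ[μ] fun x => ψ (T g x) :=
      (hT g).quasiMeasurePreserving.ae_eq h
    filter_upwards [h, h1] with x hx h1x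
    simp [hx, h1x]

/-- An a.e. invariant measurable function into `Circle` is a.e. constant. -/
lemma ae_eq_const_of_invariant {G X : Type*} [MeasurableSpace X] (μ : Measure X)
    [IsProbabilityMeasure μ] {T : G → X → X} (herg : IsErgodicAction T μ)
    {Q : X → Circle} (hQm : Measurable Q)
    (hinv : ∀ g, ∀ᵐ x ∂μ, Q (T g x) = Q x) : ∃ c, Q =ᵐ[μ] Function.const X c := by
  refine Filter.exists_eventuallyEq_const_of_forall_separating (l := ae μ) MeasurableSet ?_
  intro U hU
  have hg : ∀ g : G, μ ((T g ⁻¹' (Q ⁻¹' U)) ∆ (Q ⁻¹' U)) = 0 := by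
    intro g
    refine measure_mono_null (fun x hx => ?_) ((ae_iff.1 (hinv g)))
    simp only [Set.mem_symmDiff, Set.mem_preimage] at hx
    intro h
    rcases hx with ⟨h1, h2⟩ | ⟨h1, h2⟩ <;> exact h2 (h ▸ h1)
  rcases herg _ (hQm hU) hg with h | h
  · exact Or.inr (ae_iff.2 (by simpa using (show μ {a | Q a ∈ U} = 0 from h)))
  · refine Or.inl ?_
    have : μ ((Q ⁻¹' U)ᶜ) = 0 := by
      rw [measure_compl (hQm hU) (measure_ne_top μ _), h, measure_univ, tsub_self]
    exact ae_iff.2 (by simpa using (show μ {a | Q a ∉ U} = 0 from this))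

/-- Let `G` be a countable discrete abelian group, `X` an ergodic
`G`-system, `d ≥ 1`, and `u : X → X` a measure-preserving transformation commuting with the
`G`-action almost everywhere.  If `P : X → S¹` is a phase polynomial of degree `< d`, then
`Δ_u P = (P ∘ u) · conj P` is a phase polynomial of degree `< d - 1`. -/
theorem vertical_derivative_of_phase_polynomial
    {G : Type*} [AddCommGroup G] [Countable G]
    {X : Type*} [MeasurableSpace X] (μ : Measure X) [IsProbabilityMeasure μ]
    (T : G → X → X)
    (hT : ∀ g, MeasurePreserving (T g) μ μ)
    (hT0 : T 0 = id) (hTadd : ∀ g g', T (g + g') = T g ∘ T g')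
    (herg : IsErgodicAction T μ)
    (u : X → X) (hu : MeasurePreserving u μ μ)
    (hcomm : ∀ g, ∀ᵐ x ∂μ, u (T g x) = T g (u x))
    (d : ℕ) (hd : 1 ≤ d)
    (P : X → Circle) (hPmeas : Measurable P)
    (hP : PhasePoly T μ d P) :
    PhasePoly T μ (d - 1) (fun x => P (u x) * (P x)⁻¹) := by
  clear hT0 hTadd
  -- main claim by induction on k: PhasePoly (k+1) P → PhasePoly k (Δ_u P)
  have key : ∀ (k : ℕ) (P : X → Circle), Measurable P → PhasePoly T μ (k + 1) P →
      PhasePoly T μ k (fun x => P (u x) * (P x)⁻¹) := by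
    intro k
    induction k with
    | zero =>
      intro P hPm hP1
      have hinv : ∀ g, ∀ᵐ x ∂μ, P (T g x) = P x := by
        intro g
        filter_upwards [hP1 g] with x hx
        exact mul_inv_eq_one.1 hx
      obtain ⟨c, hc⟩ := ae_eq_const_of_invariant μ herg hPm hinv
      have hcu : (fun x => P (u x)) =ᵐ[μ] fun _ => c :=
        hu.quasiMeasurePreserving.ae_eq hc
      filter_upwards [hc, hcu] with x hx hux
      simp only [Function.const] at hx hux
      rw [hx, hux, mul_inv_cancel]
    | succ k ih =>
      intro P hPm hP1 g
      have hΔm : Measurable fun x => P (T g x) * (P x)⁻¹ :=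
        ((hPm.comp (hT g).measurable).mul hPm.inv)
      have h1 : PhasePoly T μ k (fun x => (P (T g (u x)) * (P (u x))⁻¹) *
          (P (T g x) * (P x)⁻¹)⁻¹) := ih _ hΔm (hP1 g)
      refine phasePoly_congr hT k _ _ ?_ h1
      filter_upwards [hcomm g] with x hx
      rw [← hx]
      simp [mul_inv, mul_comm, mul_left_comm, mul_assoc]
  rcases Nat.exists_eq_add_of_le hd with ⟨e, he⟩
  have : d - 1 = e := by omega
  rw [this]
  exact key e P hPmeas (by rw [← Nat.add_comm 1 e, ← he]; exact hP)
end

section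
/- Let G be a countable discrete abelian group, let X be an ergodic G-system, and let U be a compact metrizable abelian group acting on X by measure-preserving transformations (V_u)_{u∈U} commuting with the G-action, such that (u, x) ↦ V_u x is jointly measurable. Let d ≥ 1 and let f : U × X → S¹ be jointly measurable such that for each u ∈ U the function f_u := f(u, ·) is a phase polynomial of degree < d, and such that f_{uv}(x) = f_u(x) · f_v(V_u x) for all u, v ∈ U and μ-a.e. x. Then there exists an open subgroup V of U such that for every v ∈ V, f_v is a phase polynomial of degree < 1, i.e. Δ_g f_v = 1 μ-a.e. for every g ∈ G. -/
open MeasureTheory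
open scoped symmDiff
open MeasurableSpace
open scoped ENNReal NNReal Pointwise

lemma aux_const_real {G X : Type*} [MeasurableSpace X] (μ : Measure X) [IsProbabilityMeasure μ]
    (T : G → X → X) (herg : IsErgodicAction T μ)
    (ξ : X → ℝ) (hξ : Measurable ξ)
    (hinv : ∀ g, ∀ᵐ x ∂μ, ξ (T g x) = ξ x) :
    ∃ c : ℝ, ∀ᵐ x ∂μ, ξ x = c := by
  have hms : ∀ t : ℝ, MeasurableSet {x | ξ x ≤ t} :=
    fun t => measurableSet_le hξ measurable_const
  have key : ∀ t : ℝ, μ {x | ξ x ≤ t} = 0 ∨ μ {x | ξ x ≤ t} = 1 := by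
    intro t
    refine herg _ (hms t) (fun g => ?_)
    have h0 : μ {x | ¬ (ξ (T g x) = ξ x)} = 0 := by
      simpa [ae_iff] using hinv g
    refine measure_mono_null (fun x hx => ?_) h0
    rcases Set.mem_symmDiff.1 hx with ⟨h1, h2⟩ | ⟨h1, h2⟩
    · simp only [Set.mem_preimage, Set.mem_setOf_eq] at h1 h2 ⊢
      intro h; rw [h] at h1; exact h2 h1
    · simp only [Set.mem_preimage, Set.mem_setOf_eq] at h1 h2 ⊢
      intro h; rw [h] at h2; exact h2 h1
  have hcompl : ∀ t : ℝ, μ {x | ξ x ≤ t} = 1 → μ {x | ξ x ≤ t}ᶜ = 0 := by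
    intro t h1
    rw [measure_compl (hms t) (measure_ne_top _ _), h1, measure_univ, tsub_self]
  set S : Set ℝ := {t | μ {x | ξ x ≤ t} = 1} with hS
  have hSne : S.Nonempty := by
    by_contra h
    have hall : ∀ n : ℕ, μ {x | ξ x ≤ (n:ℝ)} = 0 :=
      fun n => (key n).resolve_right (fun h1 => h ⟨(n:ℝ), h1⟩)
    have h2 : μ (⋃ n : ℕ, {x | ξ x ≤ (n:ℝ)}) = 0 := measure_iUnion_null hall
    have huniv : (⋃ n : ℕ, {x | ξ x ≤ (n:ℝ)}) = Set.univ := by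
      ext x; simp only [Set.mem_iUnion, Set.mem_setOf_eq, Set.mem_univ, iff_true]
      rcases exists_nat_ge (ξ x) with ⟨n, hn⟩; exact ⟨n, hn⟩
    rw [huniv, measure_univ] at h2
    exact one_ne_zero h2
  have hbdd : ∃ n : ℕ, μ {x | ξ x ≤ -(n:ℝ)} = 0 := by
    by_contra h
    push_neg at h
    have hall : ∀ n : ℕ, μ {x | ξ x ≤ -(n:ℝ)}ᶜ = 0 :=
      fun n => hcompl _ ((key _).resolve_left (h n))
    have h2 : μ (⋃ n : ℕ, {x | ξ x ≤ -(n:ℝ)}ᶜ) = 0 := measure_iUnion_null hall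
    have huniv : (⋃ n : ℕ, {x | ξ x ≤ -(n:ℝ)}ᶜ) = Set.univ := by
      ext x
      simp only [Set.mem_iUnion, Set.mem_compl_iff, Set.mem_setOf_eq, Set.mem_univ, iff_true]
      rcases exists_nat_gt (-(ξ x)) with ⟨n, hn⟩
      exact ⟨n, by push_neg; linarith⟩
    rw [huniv, measure_univ] at h2
    exact one_ne_zero h2
  obtain ⟨n₀, hn₀⟩ := hbdd
  have hSbdd : BddBelow S := by
    refine ⟨-(n₀:ℝ), fun s hs => ?_⟩
    by_contra hlt
    push_neg at hlt
    have h2 : μ {x | ξ x ≤ s} ≤ μ {x | ξ x ≤ -(n₀:ℝ)} :=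
      measure_mono (fun x hx => le_trans hx hlt.le)
    rw [hn₀, hs] at h2
    simp at h2
  set c := sInf S with hc
  have hup : ∀ t, c < t → μ {x | ξ x ≤ t} = 1 := by
    intro t ht
    obtain ⟨s, hsS, hst⟩ := exists_lt_of_csInf_lt hSne ht
    have h2 : μ {x | ξ x ≤ s} ≤ μ {x | ξ x ≤ t} := measure_mono (fun x hx => le_trans hx hst.le)
    rw [hsS] at h2
    exact le_antisymm prob_le_one h2
  have hgt : μ {x | c < ξ x} = 0 := by
    have hsub : {x | c < ξ x} ⊆ ⋃ n : ℕ, {x | ξ x ≤ c + 1/(n+1)}ᶜ := by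
      intro x hx
      obtain ⟨n, hn⟩ := exists_nat_one_div_lt (show (0:ℝ) < ξ x - c from sub_pos.2 hx)
      refine Set.mem_iUnion.2 ⟨n, ?_⟩
      simp only [Set.mem_compl_iff, Set.mem_setOf_eq, not_le]
      have h3 : (1:ℝ)/(n+1) < ξ x - c := hn
      linarith
    refine measure_mono_null hsub (measure_iUnion_null fun n => ?_)
    refine hcompl _ (hup _ ?_)
    have hpos : (0:ℝ) < 1/((n:ℝ)+1) := by positivity
    linarith
  have hlt : μ {x | ξ x < c} = 0 := by
    have hsub : {x | ξ x < c} ⊆ ⋃ n : ℕ, {x | ξ x ≤ c - 1/(n+1)} := by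
      intro x hx
      obtain ⟨n, hn⟩ := exists_nat_one_div_lt (show (0:ℝ) < c - ξ x from sub_pos.2 hx)
      refine Set.mem_iUnion.2 ⟨n, ?_⟩
      simp only [Set.mem_setOf_eq]
      have h3 : (1:ℝ)/(n+1) < c - ξ x := hn
      linarith
    refine measure_mono_null hsub (measure_iUnion_null fun n => ?_)
    rcases key (c - 1/(n+1)) with h0 | h1
    · exact h0
    · exfalso
      have h2 : c ≤ c - 1/(n+1) := csInf_le hSbdd h1
      have hpos : (0:ℝ) < 1/((n:ℝ)+1) := by positivity
      linarith
  refine ⟨c, ?_⟩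
  rw [ae_iff]
  refine measure_mono_null (fun x hx => ?_) (measure_union_null hlt hgt)
  rcases lt_or_gt_of_ne (hx : ξ x ≠ c) with h | h
  · exact Or.inl h
  · exact Or.inr h

lemma aux_const_complex {G X : Type*} [MeasurableSpace X] (μ : Measure X) [IsProbabilityMeasure μ]
    (T : G → X → X) (herg : IsErgodicAction T μ)
    (ψ : X → ℂ) (hψ : Measurable ψ)
    (hinv : ∀ g, ∀ᵐ x ∂μ, ψ (T g x) = ψ x) :
    ∃ c : ℂ, ∀ᵐ x ∂μ, ψ x = c := by
  obtain ⟨a, ha⟩ := aux_const_real μ T herg (fun x => (ψ x).re)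
    (Complex.measurable_re.comp hψ) (fun g => (hinv g).mono fun x hx => congrArg Complex.re hx)
  obtain ⟨b, hb⟩ := aux_const_real μ T herg (fun x => (ψ x).im)
    (Complex.measurable_im.comp hψ) (fun g => (hinv g).mono fun x hx => congrArg Complex.im hx)
  refine ⟨⟨a, b⟩, ?_⟩
  filter_upwards [ha, hb] with x hxa hxb
  exact Complex.ext hxa hxb

lemma circle_nnnorm (z : Circle) : ‖(z : ℂ)‖₊ = 1 := by
  ext
  exact Circle.norm_coe z

lemma circle_deriv_nnnorm (a b : Circle) :
    ‖((a * b⁻¹ : Circle) : ℂ) - 1‖₊ ≤ ‖(a:ℂ) - 1‖₊ + ‖(b:ℂ) - 1‖₊ := by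
  have h1 : ((a * b⁻¹ : Circle) : ℂ) - 1 = ((a:ℂ) - (b:ℂ)) * ((b:ℂ))⁻¹ := by
    rw [sub_mul, mul_inv_cancel₀ (Circle.coe_ne_zero b)]
    push_cast
    ring
  rw [h1, nnnorm_mul, nnnorm_inv, circle_nnnorm, inv_one, mul_one]
  calc ‖(a:ℂ) - (b:ℂ)‖₊ = ‖((a:ℂ) - 1) + (1 - (b:ℂ))‖₊ := by ring_nf
    _ ≤ ‖(a:ℂ) - 1‖₊ + ‖1 - (b:ℂ)‖₊ := nnnorm_add_le _ _
    _ = ‖(a:ℂ) - 1‖₊ + ‖(b:ℂ) - 1‖₊ := by rw [show (1:ℂ) - (b:ℂ) = -((b:ℂ) - 1) from by ring, nnnorm_neg]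

lemma circle_coe_measurable : Measurable (fun z : Circle => (z : ℂ)) := by
  exact Continuous.measurable (α := Circle) continuous_subtype_val

lemma meas_aux {X : Type*} [MeasurableSpace X] {φ : X → Circle} (h : Measurable φ) :
    Measurable fun x => (‖((φ x : ℂ)) - 1‖₊ : ℝ≥0∞) :=
  ((circle_coe_measurable.comp h).sub measurable_const).nnnorm.coe_nnreal_ennreal

lemma aux_sep {G X : Type*} [MeasurableSpace X] (μ : Measure X) [IsProbabilityMeasure μ]
    (T : G → X → X) (hT : ∀ g, MeasurePreserving (T g) μ μ) (herg : IsErgodicAction T μ) :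
    ∀ (k : ℕ) (φ : X → Circle), Measurable φ → PhasePoly T μ (k+1) φ →
      (∫⁻ x, ‖(φ x : ℂ) - 1‖₊ ∂μ) < 2⁻¹ ^ k → PhasePoly T μ 1 φ := by
  intro k
  induction k with
  | zero => exact fun φ _ h _ => h
  | succ k ih =>
    intro φ hφm hpoly hsmall
    intro g
    show ∀ᵐ x ∂μ, φ (T g x) * (φ x)⁻¹ = 1
    set ψ : X → Circle := fun x => φ (T g x) * (φ x)⁻¹ with hψ
    have hψm : Measurable ψ := ((hφm.comp (hT g).measurable).mul hφm.inv)
    have hint : ∀ (φ' : X → Circle), Measurable φ' →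
        ∫⁻ x, ‖(φ' (T g x) : ℂ) - 1‖₊ ∂μ = ∫⁻ x, ‖(φ' x : ℂ) - 1‖₊ ∂μ := by
      intro φ' hφ'
      exact (hT g).lintegral_comp (meas_aux hφ')
    have hbound : (∫⁻ x, ‖(ψ x : ℂ) - 1‖₊ ∂μ) < 2⁻¹ ^ k := by
      have hm1 : Measurable fun x => (‖((φ (T g x) : ℂ)) - 1‖₊ : ℝ≥0∞) :=
        meas_aux (hφm.comp (hT g).measurable)
      have hb : (∫⁻ x, ‖(ψ x : ℂ) - 1‖₊ ∂μ)
          ≤ (∫⁻ x, ((‖(φ (T g x) : ℂ) - 1‖₊ : ℝ≥0∞) + (‖(φ x : ℂ) - 1‖₊ : ℝ≥0∞)) ∂μ) := by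
        refine lintegral_mono (fun x => ?_)
        rw [← ENNReal.coe_add]
        exact ENNReal.coe_le_coe.2 (circle_deriv_nnnorm (φ (T g x)) (φ x))
      rw [lintegral_add_left hm1] at hb
      rw [hint φ hφm] at hb
      have h2 : (∫⁻ x, ‖(φ x : ℂ) - 1‖₊ ∂μ) + (∫⁻ x, ‖(φ x : ℂ) - 1‖₊ ∂μ)
          < 2⁻¹ ^ (k+1) + 2⁻¹ ^ (k+1) := by
        exact ENNReal.add_lt_add hsmall hsmall
      have h3 : (2⁻¹ : ℝ≥0∞) ^ (k+1) + 2⁻¹ ^ (k+1) = 2⁻¹ ^ k := by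
        rw [pow_succ, ← two_mul, mul_comm (2:ℝ≥0∞), mul_assoc,
          ENNReal.inv_mul_cancel two_ne_zero (by norm_num), mul_one]
      exact lt_of_le_of_lt hb (h3 ▸ h2)
    have hψ1 : PhasePoly T μ 1 ψ := ih ψ hψm (hpoly g) hbound
    have hψinv : ∀ h, ∀ᵐ x ∂μ, (fun x => (ψ x : ℂ)) (T h x) = (fun x => (ψ x : ℂ)) x := by
      intro h
      have := hψ1 h
      have h2 : ∀ᵐ x ∂μ, ψ (T h x) * (ψ x)⁻¹ = 1 := this
      filter_upwards [h2] with x hx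
      have h3 : ψ (T h x) = ψ x := mul_inv_eq_one.1 hx
      exact congrArg (fun z : Circle => (z : ℂ)) h3
    obtain ⟨c, hc⟩ := aux_const_complex μ T herg (fun x => ((ψ x : ℂ)))
      (circle_coe_measurable.comp hψm) hψinv
    -- integrability of φ as complex function
    have hφC : Measurable (fun x => (φ x : ℂ)) := circle_coe_measurable.comp hφm
    have hφint : Integrable (fun x => (φ x : ℂ)) μ := by
      refine Integrable.mono' (integrable_const 1) hφC.aestronglyMeasurable ?_
      refine Filter.Eventually.of_forall (fun x => ?_)
      rw [show ‖(φ x : ℂ)‖ = 1 from by rw [← NNReal.coe_one, ← circle_nnnorm (φ x)]; rfl]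
  -- ∫ φ∘Tg = ∫ φ
    have hTgint : ∫ x, (φ (T g x) : ℂ) ∂μ = ∫ x, (φ x : ℂ) ∂μ := by
      calc ∫ x, (φ (T g x) : ℂ) ∂μ = ∫ y, (φ y : ℂ) ∂(Measure.map (T g) μ) :=
            (integral_map (hT g).measurable.aemeasurable
              (by rw [(hT g).map_eq]; exact hφC.aestronglyMeasurable)).symm
        _ = ∫ x, (φ x : ℂ) ∂μ := by rw [(hT g).map_eq]
    -- φ(Tg x) = ψ x * φ x pointwise
    have hpt : ∀ x, (φ (T g x) : ℂ) = (ψ x : ℂ) * (φ x : ℂ) := by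
      intro x
      rw [hψ]
      push_cast
      field_simp
    have hintc : ∫ x, (φ (T g x) : ℂ) ∂μ = c * ∫ x, (φ x : ℂ) ∂μ := by
      rw [show (fun x => (φ (T g x) : ℂ)) = fun x => (ψ x : ℂ) * (φ x : ℂ) from funext hpt]
      rw [show ∫ x, (ψ x : ℂ) * (φ x : ℂ) ∂μ = ∫ x, c * (φ x : ℂ) ∂μ from
        integral_congr_ae ((hc.mono fun x hx => by
          show ((ψ x : ℂ)) * ((φ x : ℂ)) = c * ((φ x : ℂ))
          rw [hx]))]
      simp_rw [← smul_eq_mul]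
      rw [integral_smul]
    have hne : (∫ x, (φ x : ℂ) ∂μ) ≠ 0 := by
      intro h0
      have h1 : ∫ x, ((φ x : ℂ) - 1) ∂μ = (∫ x, (φ x : ℂ) ∂μ) - 1 := by
        rw [integral_sub hφint (integrable_const 1), integral_const]
        simp
      have h2 : ‖∫ x, ((φ x : ℂ) - 1) ∂μ‖ < 1 := by
        refine lt_of_le_of_lt (norm_integral_le_lintegral_norm _) ?_
        have h3 : (∫⁻ x, ENNReal.ofReal ‖(φ x : ℂ) - 1‖ ∂μ) < 1 := by
          rw [lintegral_congr fun x => ofReal_norm_eq_enorm ((φ x : ℂ) - 1)]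
          refine lt_of_lt_of_le hsmall (pow_le_one' ?_ _)
          exact ENNReal.inv_le_one.2 one_le_two
        have h4 := ENNReal.toReal_lt_toReal (ne_top_of_lt h3) ENNReal.one_ne_top
        rw [ENNReal.toReal_one] at h4
        exact h4.2 h3
      rw [h1, h0, zero_sub, norm_neg, norm_one] at h2
      exact lt_irrefl _ h2
    have hc1 : c = 1 := by
      have := hintc
      rw [hTgint] at this
      have h5 : (1 - c) * ∫ x, (φ x : ℂ) ∂μ = 0 := by
        rw [sub_mul, one_mul, ← this, sub_self]
      rcases mul_eq_zero.1 h5 with h | h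
      · linear_combination -h
      · exact absurd h hne
    filter_upwards [hc] with x hx
    rw [hc1] at hx
    exact Circle.coe_eq_one.1 hx

lemma aux_section_eq {U X : Type*} [mX : MeasurableSpace X] {m' : MeasurableSpace U}
    {h : U × X → ℝ} (hm : StronglyMeasurable[m'.prod mX] h) {u u' : U}
    (hsame : ∀ A : Set U, MeasurableSet[m'] A → (u ∈ A ↔ u' ∈ A)) (x : X) :
    h (u, x) = h (u', x) := by
  have hmeas : Measurable[m'.prod mX] h := hm.measurable
  have hEm : MeasurableSet[m'.prod mX] (h ⁻¹' {h (u, x)}) :=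
    hmeas (measurableSet_singleton _)
  let m2 : MeasurableSpace (U × X) :=
    { MeasurableSet' := fun S => ∀ y, ((u, y) ∈ S ↔ (u', y) ∈ S)
      measurableSet_empty := by simp
      measurableSet_compl := fun S hS y => by simp [hS y]
      measurableSet_iUnion := fun S hS y => by
        simp only [Set.mem_iUnion]
        exact exists_congr fun i => hS i y }
  have hle : m'.prod mX ≤ m2 := by
    refine sup_le ?_ ?_
    · rintro S ⟨A, hA, rfl⟩ y
      simpa using hsame A hA
    · rintro S ⟨B, hB, rfl⟩ y
      simp
  have h2 : ∀ y, ((u, y) ∈ h ⁻¹' {h (u, x)} ↔ (u', y) ∈ h ⁻¹' {h (u, x)}) := hle _ hEm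
  have h3 := (h2 x).1 rfl
  simpa using h3.symm

lemma aux_close_sections {U X : Type*} [mU : MeasurableSpace U] [CountablyGenerated U]
    [mX : MeasurableSpace X]
    (lam : Measure U) [IsProbabilityMeasure lam] (μ : Measure X) [IsProbabilityMeasure μ]
    (F : U × X → ℂ) (hF : Measurable F) (hFbd : ∀ p, ‖F p‖ ≤ 1)
    (δ : ℝ≥0∞) (hδ : 0 < δ) (hδ1 : δ ≤ 1) :
    ∃ A : Set U, MeasurableSet A ∧ 0 < lam A ∧
      ∀ u ∈ A, ∀ u' ∈ A, (∫⁻ x, ‖F (u, x) - F (u', x)‖₊ ∂μ) < δ := by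
  classical
  set t : ℕ → Set U := natGeneratingSequence U with ht
  have hgen : generateFrom (Set.range t) = mU := generateFrom_natGeneratingSequence U
  set 𝒢 : ℕ → MeasurableSpace U := fun n => generateFrom (memPartition t n) with h𝒢
  have h𝒢le : ∀ n, 𝒢 n ≤ mU := by
    intro n
    rw [← hgen]
    exact generateFrom_memPartition_le_range t n
  have hprod_mono : ∀ {m m' : MeasurableSpace U}, m ≤ m' → m.prod mX ≤ m'.prod mX := by
    intro m m' hmm
    exact sup_le_sup (MeasurableSpace.comap_mono hmm) le_rfl
  set ℱ : Filtration ℕ (Prod.instMeasurableSpace : MeasurableSpace (U × X)) :=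
    ⟨fun n => (𝒢 n).prod mX,
     monotone_nat_of_le_succ (fun n => hprod_mono (generateFrom_memPartition_le_succ t n)),
     fun n => hprod_mono (h𝒢le n)⟩ with hℱ
  have hsup : (⨆ n, (𝒢 n).prod mX) = (Prod.instMeasurableSpace : MeasurableSpace (U × X)) := by
    refine le_antisymm (iSup_le fun n => hprod_mono (h𝒢le n)) ?_
    have h1 : (Prod.instMeasurableSpace : MeasurableSpace (U × X)) = mU.prod mX := rfl
    rw [h1]
    refine sup_le ?_ ?_
    · have h2 : mU ≤ ⨆ n, 𝒢 n := by
        rw [← hgen, ← generateFrom_iUnion_memPartition t]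
        refine generateFrom_le (fun s hs => ?_)
        obtain ⟨n, hn⟩ := Set.mem_iUnion.1 hs
        exact le_iSup 𝒢 n _ (measurableSet_generateFrom hn)
      calc MeasurableSpace.comap Prod.fst mU ≤ MeasurableSpace.comap Prod.fst (⨆ n, 𝒢 n) :=
            MeasurableSpace.comap_mono h2
        _ = ⨆ n, MeasurableSpace.comap Prod.fst (𝒢 n) := MeasurableSpace.comap_iSup
        _ ≤ ⨆ n, (𝒢 n).prod mX := iSup_mono (fun n => le_sup_left)
    · calc MeasurableSpace.comap Prod.snd mX ≤ (𝒢 0).prod mX := le_sup_right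
        _ ≤ ⨆ n, (𝒢 n).prod mX := le_iSup (fun n => (𝒢 n).prod mX) 0
  set ν : Measure (U × X) := lam.prod μ with hν
  have hmRe : Measurable fun p => (F p).re := Complex.measurable_re.comp hF
  have hmIm : Measurable fun p => (F p).im := Complex.measurable_im.comp hF
  have hiRe : Integrable (fun p => (F p).re) ν := by
    refine Integrable.mono' (integrable_const 1) hmRe.aestronglyMeasurable ?_
    exact Filter.Eventually.of_forall fun p =>
      le_trans (Complex.abs_re_le_norm (F p)) (hFbd p)
  have hiIm : Integrable (fun p => (F p).im) ν := by
    refine Integrable.mono' (integrable_const 1) hmIm.aestronglyMeasurable ?_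
    exact Filter.Eventually.of_forall fun p =>
      le_trans (Complex.abs_im_le_norm (F p)) (hFbd p)
  have hgmRe : StronglyMeasurable[⨆ n, ℱ n] fun p => (F p).re := by
    have : (⨆ n, ℱ n) = (Prod.instMeasurableSpace : MeasurableSpace (U × X)) := hsup
    rw [this]
    exact hmRe.stronglyMeasurable
  have hgmIm : StronglyMeasurable[⨆ n, ℱ n] fun p => (F p).im := by
    have : (⨆ n, ℱ n) = (Prod.instMeasurableSpace : MeasurableSpace (U × X)) := hsup
    rw [this]
    exact hmIm.stronglyMeasurable
  have hcvRe := hiRe.tendsto_eLpNorm_condExp hgmRe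
  have hcvIm := hiIm.tendsto_eLpNorm_condExp hgmIm
  have hε : (0:ℝ≥0∞) < δ / 8 / 2 :=
    ENNReal.div_pos_iff.2 ⟨(ENNReal.div_pos_iff.2 ⟨hδ.ne', by norm_num⟩).ne', by norm_num⟩
  have hevRe := hcvRe.eventually_lt_const hε
  have hevIm := hcvIm.eventually_lt_const hε
  obtain ⟨n, hnRe, hnIm⟩ := (hevRe.and hevIm).exists
  set cRe : U × X → ℝ := ν[(fun p => (F p).re) | ℱ n] with hcRe
  set cIm : U × X → ℝ := ν[(fun p => (F p).im) | ℱ n] with hcIm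
  have hcRem : Measurable cRe := (stronglyMeasurable_condExp.mono (ℱ.le n)).measurable
  have hcImm : Measurable cIm := (stronglyMeasurable_condExp.mono (ℱ.le n)).measurable
  -- the u-section error function
  set r : U → ℝ≥0∞ := fun u =>
    ∫⁻ x, ((‖cRe (u, x) - (F (u, x)).re‖₊ : ℝ≥0∞) + (‖cIm (u, x) - (F (u, x)).im‖₊ : ℝ≥0∞)) ∂μ
    with hr
  have hrm' : Measurable fun p : U × X =>
      ((‖cRe p - (F p).re‖₊ : ℝ≥0∞) + (‖cIm p - (F p).im‖₊ : ℝ≥0∞)) :=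
    ((hcRem.sub hmRe).nnnorm.coe_nnreal_ennreal).add
      ((hcImm.sub hmIm).nnnorm.coe_nnreal_ennreal)
  have hrm : Measurable r := hrm'.lintegral_prod_right'
  have hrint : (∫⁻ u, r u ∂lam) < δ / 8 := by
    have h1 : (∫⁻ u, r u ∂lam)
        = ∫⁻ p, ((‖cRe p - (F p).re‖₊ : ℝ≥0∞) + (‖cIm p - (F p).im‖₊ : ℝ≥0∞)) ∂ν :=
      (lintegral_prod _ hrm'.aemeasurable).symm
    have h2 : (∫⁻ p, ((‖cRe p - (F p).re‖₊ : ℝ≥0∞) + (‖cIm p - (F p).im‖₊ : ℝ≥0∞)) ∂ν)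
        = eLpNorm (cRe - fun p => (F p).re) 1 ν + eLpNorm (cIm - fun p => (F p).im) 1 ν := by
      rw [lintegral_add_left (f := fun p => (‖cRe p - (F p).re‖₊ : ℝ≥0∞)) ((hcRem.sub hmRe).nnnorm.coe_nnreal_ennreal)]
      rw [eLpNorm_one_eq_lintegral_enorm, eLpNorm_one_eq_lintegral_enorm]
      rfl
    rw [h1, h2]
    calc eLpNorm (cRe - fun p => (F p).re) 1 ν + eLpNorm (cIm - fun p => (F p).im) 1 ν
        < δ/8/2 + δ/8/2 := ENNReal.add_lt_add hnRe hnIm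
      _ = δ/8 := ENNReal.add_halves _
  have hδtop : δ ≠ ⊤ := (lt_of_le_of_lt hδ1 ENNReal.one_lt_top).ne
  -- the set where the section error is small
  set Om : Set U := {u | r u < δ / 2} with hOm
  have hOmm : MeasurableSet Om := hrm measurableSet_Iio
  have hOmpos : 0 < lam Om := by
    rcases (zero_le : 0 ≤ lam Om).lt_or_eq with h | h
    · exact h
    · exfalso
      have hc1 : lam Omᶜ = 1 := by
        rw [measure_compl hOmm (measure_ne_top _ _), ← h, tsub_zero, measure_univ]
      have hcompl : Omᶜ = {u | δ/2 ≤ r u} := by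
        ext u; simp [hOm, not_lt]
      have hmark := mul_meas_ge_le_lintegral (μ := lam) hrm (δ/2)
      rw [← hcompl, hc1, mul_one] at hmark
      have hlt : δ/2 < δ/8 := lt_of_le_of_lt hmark hrint
      have h2 : (δ/2).toReal < (δ/8).toReal :=
        ENNReal.toReal_lt_toReal (by simp [ENNReal.div_eq_top, hδtop]) (by simp [ENNReal.div_eq_top, hδtop]) |>.2 hlt
      rw [ENNReal.toReal_div, ENNReal.toReal_div] at h2
      have hδr : 0 < δ.toReal := ENNReal.toReal_pos hδ.ne' hδtop
      norm_num at h2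
      linarith
  -- find an atom with positive intersection
  have hatom : ∃ P ∈ memPartition t n, 0 < lam (P ∩ Om) := by
    by_contra hno
    push_neg at hno
    have hnull : ∀ P ∈ memPartition t n, lam (P ∩ Om) = 0 :=
      fun P hP => le_antisymm (hno P hP) zero_le
    have hcover : Om = ⋃ P ∈ memPartition t n, (P ∩ Om) := by
      ext u
      simp only [Set.mem_iUnion, Set.mem_inter_iff, exists_prop]
      constructor
      · intro hu
        have : u ∈ ⋃₀ memPartition t n := by rw [sUnion_memPartition]; trivial
        obtain ⟨P, hP, huP⟩ := this
        exact ⟨P, hP, huP, hu⟩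
      · rintro ⟨P, hP, huP, hu⟩; exact hu
    have : lam Om = 0 := by
      rw [hcover]
      exact measure_biUnion_null_iff (finite_memPartition t n).countable |>.2 hnull
    rw [this] at hOmpos
    exact lt_irrefl _ hOmpos
  obtain ⟨P, hPmem, hPpos⟩ := hatom
  have hPmU : MeasurableSet P := h𝒢le n _ (measurableSet_generateFrom hPmem)
  refine ⟨P ∩ Om, hPmU.inter hOmm, hPpos, ?_⟩
  rintro u ⟨huP, huOm⟩ u' ⟨hu'P, hu'Om⟩
  -- same atom: sections of condexp agree
  have hsame : ∀ B : Set U, MeasurableSet[𝒢 n] B → (u ∈ B ↔ u' ∈ B) := by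
    intro B hB
    let m3 : MeasurableSpace U :=
      { MeasurableSet' := fun B => (u ∈ B ↔ u' ∈ B)
        measurableSet_empty := by simp
        measurableSet_compl := fun S hS => by simp [hS]
        measurableSet_iUnion := fun S hS => by
          simp only [Set.mem_iUnion]
          exact exists_congr fun i => hS i }
    have hle3 : 𝒢 n ≤ m3 := by
      refine generateFrom_le (fun s hs => ?_)
      by_cases hsP : s = P
      · subst hsP; exact iff_of_true huP hu'P
      · have hdisj := disjoint_memPartition t n hs hPmem hsP
        have h1 : u ∉ s := fun hu => (Set.disjoint_left.1 hdisj) hu huP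
        have h2 : u' ∉ s := fun hu => (Set.disjoint_left.1 hdisj) hu hu'P
        exact iff_of_false h1 h2
    exact hle3 B hB
  have hsmRe : StronglyMeasurable[(𝒢 n).prod mX] cRe := stronglyMeasurable_condExp
  have hsmIm : StronglyMeasurable[(𝒢 n).prod mX] cIm := stronglyMeasurable_condExp
  have hsecRe : ∀ x, cRe (u, x) = cRe (u', x) := aux_section_eq hsmRe hsame
  have hsecIm : ∀ x, cIm (u, x) = cIm (u', x) := aux_section_eq hsmIm hsame
  -- pointwise triangle inequality
  have hnn : ∀ (z : ℂ), (‖z‖₊ : ℝ≥0∞) ≤ (‖z.re‖₊ : ℝ≥0∞) + (‖z.im‖₊ : ℝ≥0∞) := by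
    intro z
    rw [← ENNReal.coe_add]
    refine ENNReal.coe_le_coe.2 ?_
    rw [← NNReal.coe_le_coe]
    push_cast
    rw [Real.norm_eq_abs, Real.norm_eq_abs]
    exact Complex.norm_le_abs_re_add_abs_im z
  have hptw : ∀ x, (‖F (u, x) - F (u', x)‖₊ : ℝ≥0∞)
      ≤ (((‖cRe (u, x) - (F (u, x)).re‖₊ : ℝ≥0∞) + (‖cIm (u, x) - (F (u, x)).im‖₊ : ℝ≥0∞))
        + ((‖cRe (u', x) - (F (u', x)).re‖₊ : ℝ≥0∞) + (‖cIm (u', x) - (F (u', x)).im‖₊ : ℝ≥0∞))) := by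
    intro x
    set z1 : ℂ := F (u, x) - Complex.mk (cRe (u, x)) (cIm (u, x)) with hz1
    set z2 : ℂ := Complex.mk (cRe (u', x)) (cIm (u', x)) - F (u', x) with hz2
    have hsplit : F (u, x) - F (u', x) = z1 + z2 := by
      rw [hz1, hz2, hsecRe x, hsecIm x]
      ring
    calc (‖F (u, x) - F (u', x)‖₊ : ℝ≥0∞) = ‖z1 + z2‖₊ := by rw [hsplit]
      _ ≤ (‖z1‖₊ : ℝ≥0∞) + (‖z2‖₊ : ℝ≥0∞) := by
          rw [← ENNReal.coe_add]; exact ENNReal.coe_le_coe.2 (nnnorm_add_le _ _)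
      _ ≤ _ := by
          have hrev : ∀ a b : ℝ, ‖a - b‖₊ = ‖b - a‖₊ :=
            fun a b => NNReal.eq (by simp [norm_sub_rev])
          refine add_le_add (le_trans (hnn z1) (le_of_eq ?_)) (le_trans (hnn z2) (le_of_eq ?_))
          · have h1 : z1.re = (F (u, x)).re - cRe (u, x) := by simp [hz1]
            have h2 : z1.im = (F (u, x)).im - cIm (u, x) := by simp [hz1]
            rw [h1, h2, hrev, hrev ((F (u, x)).im)]
          · have h1 : z2.re = cRe (u', x) - (F (u', x)).re := by simp [hz2]
            have h2 : z2.im = cIm (u', x) - (F (u', x)).im := by simp [hz2]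
            rw [h1, h2]
  have hfinal : (∫⁻ x, ‖F (u, x) - F (u', x)‖₊ ∂μ) ≤ r u + r u' := by
    calc (∫⁻ x, ‖F (u, x) - F (u', x)‖₊ ∂μ)
        ≤ ∫⁻ x, (((‖cRe (u, x) - (F (u, x)).re‖₊ : ℝ≥0∞) + (‖cIm (u, x) - (F (u, x)).im‖₊ : ℝ≥0∞))
          + ((‖cRe (u', x) - (F (u', x)).re‖₊ : ℝ≥0∞) + (‖cIm (u', x) - (F (u', x)).im‖₊ : ℝ≥0∞))) ∂μ :=
          lintegral_mono hptw
      _ = r u + r u' := by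
          rw [lintegral_add_left]
          exact (hrm'.comp measurable_prodMk_left : Measurable fun x =>
            ((‖cRe (u, x) - (F (u, x)).re‖₊ : ℝ≥0∞) + (‖cIm (u, x) - (F (u, x)).im‖₊ : ℝ≥0∞)))
  refine lt_of_le_of_lt hfinal ?_
  calc r u + r u' < δ/2 + δ/2 := ENNReal.add_lt_add huOm hu'Om
    _ = δ := ENNReal.add_halves _

/-- Let `G` be a countable discrete abelian group, `X` an ergodic
`G`-system, and `U` a compact metrizable abelian group acting on `X` by measure-preserving
transformations `V_u` commuting with the `G`-action, jointly measurably.  Let `d ≥ 1` and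
let `f : U × X → S¹` be jointly measurable such that each `f_u` is a phase polynomial of
degree `< d` and `f_{uv}(x) = f_u(x) · f_v(V_u x)`.  Then there is an open subgroup `W` of
`U` such that `f_v` is a phase polynomial of degree `< 1` for every `v ∈ W`. -/
theorem phase_polynomial_cocycle_in_u_trivial_on_open_subgroup
    {G : Type*} [AddCommGroup G] [Countable G]
    {X : Type*} [MeasurableSpace X] (μ : Measure X) [IsProbabilityMeasure μ]
    {U : Type*} [CommGroup U] [TopologicalSpace U] [IsTopologicalGroup U]
    [CompactSpace U] [TopologicalSpace.MetrizableSpace U]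
    [MeasurableSpace U] [BorelSpace U]
    (T : G → X → X)
    (hT : ∀ g, MeasurePreserving (T g) μ μ)
    (hT0 : T 0 = id) (hTadd : ∀ g g', T (g + g') = T g ∘ T g')
    (herg : IsErgodicAction T μ)
    (V : U → X → X)
    (hV : ∀ u, MeasurePreserving (V u) μ μ)
    (hVjoint : Measurable (fun p : U × X => V p.1 p.2))
    (hV1 : ∀ᵐ x ∂μ, V 1 x = x)
    (hVmul : ∀ u v, ∀ᵐ x ∂μ, V (u * v) x = V u (V v x))
    (hVcomm : ∀ u g, ∀ᵐ x ∂μ, V u (T g x) = T g (V u x))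
    (d : ℕ) (hd : 1 ≤ d)
    (f : U → X → Circle)
    (hfjoint : Measurable (fun p : U × X => f p.1 p.2))
    (hfpoly : ∀ u, PhasePoly T μ d (f u))
    (hfcoc : ∀ u v, ∀ᵐ x ∂μ, f (u * v) x = f u x * f v (V u x)) :
    ∃ W : Subgroup U, IsOpen (W : Set U) ∧
      ∀ v ∈ W, PhasePoly T μ 1 (f v) := by
  classical
  -- measurability of each section
  have hfm : ∀ u, Measurable (f u) := fun u => hfjoint.comp measurable_prodMk_left
  -- f 1 = 1 a.e.
  have hf1 : ∀ᵐ x ∂μ, f 1 x = 1 := by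
    filter_upwards [hfcoc 1 1, hV1] with x h1 h2
    rw [one_mul, h2] at h1
    have h3 : f 1 x * f 1 x = f 1 x * 1 := by rw [mul_one]; exact h1.symm
    exact mul_left_cancel h3
  -- key cocycle identity for L¹-type distances
  have hD : ∀ u v : U, (∫⁻ x, ‖((f (u*v) x : ℂ)) - ((f u x : ℂ))‖₊ ∂μ)
      = ∫⁻ x, ‖((f v x : ℂ)) - 1‖₊ ∂μ := by
    intro u v
    have h1 : (∫⁻ x, ‖((f (u*v) x : ℂ)) - ((f u x : ℂ))‖₊ ∂μ)
        = ∫⁻ x, ‖((f v (V u x) : ℂ)) - 1‖₊ ∂μ := by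
      refine lintegral_congr_ae ?_
      filter_upwards [hfcoc u v] with x hx
      congr 1
      rw [hx]
      have : ((f u x * f v (V u x) : Circle) : ℂ) - (f u x : ℂ)
          = (f u x : ℂ) * ((f v (V u x) : ℂ) - 1) := by
        push_cast; ring
      rw [this, nnnorm_mul, circle_nnnorm, one_mul]
    rw [h1]
    exact (hV u).lintegral_comp (meas_aux (hfm v))
  -- the subgroup of invariant sections
  have hqT : ∀ g : G, Filter.Tendsto (T g) (ae μ) (ae μ) :=
    fun g => (hT g).quasiMeasurePreserving.tendsto_ae
  have hqV : ∀ u : U, Filter.Tendsto (V u) (ae μ) (ae μ) :=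
    fun u => (hV u).quasiMeasurePreserving.tendsto_ae
  set W : Subgroup U :=
    { carrier := {v | ∀ g : G, ∀ᵐ x ∂μ, f v (T g x) * (f v x)⁻¹ = 1}
      one_mem' := by
        intro g
        filter_upwards [hf1, (hqT g).eventually hf1] with x h1 h2
        rw [h1, h2, mul_inv_cancel]
      mul_mem' := by
        intro a b ha hb g
        filter_upwards [hfcoc a b, (hqT g).eventually (hfcoc a b), hVcomm a g,
          (hqV a).eventually (hb g), ha g] with x h1 h2 h3 h4 h5
        rw [h2, h1, h3]
        have e5 : f a (T g x) = f a x := mul_inv_eq_one.1 h5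
        have e4 : f b (T g (V a x)) = f b (V a x) := mul_inv_eq_one.1 h4
        rw [e5, e4, mul_inv_cancel]
      inv_mem' := by
        intro a ha g
        -- the coboundary identity for the inverse
        have hinv : ∀ᵐ x ∂μ, f a⁻¹ (V a x) = (f a x)⁻¹ := by
          filter_upwards [hfcoc a a⁻¹, hf1] with x h1 h2
          rw [mul_inv_cancel, h2] at h1
          exact (inv_eq_of_mul_eq_one_right h1.symm).symm
        set h : X → Circle := fun y => f a⁻¹ (T g y) * (f a⁻¹ y)⁻¹ with hh
        have hVae : ∀ᵐ x ∂μ, h (V a x) = 1 := by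
          filter_upwards [hinv, (hqT g).eventually hinv, hVcomm a g, ha g]
            with x h1 h2 h3 h4
          show f a⁻¹ (T g (V a x)) * (f a⁻¹ (V a x))⁻¹ = 1
          rw [← h3, h2, h1]
          have e4 : f a (T g x) = f a x := mul_inv_eq_one.1 h4
          rw [e4, inv_inv, inv_mul_cancel]
        have hm : Measurable h := ((hfm a⁻¹).comp (hT g).measurable).mul ((hfm a⁻¹).inv)
        have hN : MeasurableSet {y | ¬ h y = 1} := (hm (measurableSet_singleton 1)).compl
        have h0 : μ (V a ⁻¹' {y | ¬ h y = 1}) = 0 := by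
          rw [show V a ⁻¹' {y | ¬ h y = 1} = {x | ¬ h (V a x) = 1} from rfl]
          exact ae_iff.1 hVae
        have h1 : μ {y | ¬ h y = 1} = 0 := by
          rw [← (hV a).measure_preimage hN.nullMeasurableSet]
          exact h0
        exact ae_iff.2 h1 } with hW
  refine ⟨W, ?_, ?_⟩
  · -- openness via Steinhaus
    letI : MetricSpace U := TopologicalSpace.metrizableSpaceMetric U
    haveI : SecondCountableTopology U := inferInstance
    haveI : CountablyGenerated U := inferInstance
    haveI : LocallyCompactSpace U := inferInstance
    set lam : Measure U := Measure.haarMeasure (⊤ : TopologicalSpace.PositiveCompacts U)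
      with hlam
    haveI : IsProbabilityMeasure lam := by
      constructor
      rw [show (Set.univ : Set U)
          = ((⊤ : TopologicalSpace.PositiveCompacts U) : Set U) from
          (TopologicalSpace.PositiveCompacts.coe_top).symm]
      exact Measure.haarMeasure_self
    set δ₀ : ℝ≥0∞ := 2⁻¹ ^ (d - 1) with hδ₀
    have hδ₀pos : 0 < δ₀ := by
      refine ENNReal.pow_pos ?_ _
      exact ENNReal.inv_pos.2 (by norm_num)
    have hδ₀le : δ₀ ≤ 1 := pow_le_one' (ENNReal.inv_le_one.2 one_le_two) _
    obtain ⟨A, hAm, hApos, hA⟩ := aux_close_sections lam μ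
      (fun p : U × X => ((f p.1 p.2 : ℂ))) (circle_coe_measurable.comp hfjoint)
      (fun p => le_of_eq (by rw [← NNReal.coe_one, ← circle_nnnorm (f p.1 p.2)]; rfl))
      δ₀ hδ₀pos hδ₀le
    have hsub : A / A ⊆ (W : Set U) := by
      rintro v ⟨a, ha, b, hb, rfl⟩
      have hab : b * (a / b) = a := by
        rw [div_eq_mul_inv, mul_comm b, inv_mul_cancel_right]
      have hc : (∫⁻ x, ‖((f (a/b) x : ℂ)) - 1‖₊ ∂μ) < δ₀ := by
        rw [← hD b (a/b)]
        rw [show b * (a/b) = a from hab]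
        exact hA a ha b hb
      have hpoly : PhasePoly T μ ((d-1)+1) (f (a/b)) := by
        rw [Nat.sub_add_cancel hd]
        exact hfpoly (a/b)
      intro g
      exact aux_sep μ T hT herg (d-1) (f (a/b)) (hfm (a/b)) hpoly hc g
    exact Subgroup.isOpen_of_mem_nhds W (g := 1) (Filter.mem_of_superset
      (Measure.div_mem_nhds_one_of_haar_pos lam A hAm hApos) hsub)
  · intro v hv g
    exact hv g
end

section
/- Let G be a countable discrete abelian group, let X be an ergodic G-system, and let U be a compact connected metrizable abelian group acting on X by measure-preserving transformations (V_u)_{u∈U} commuting with the G-action, such that (u, x) ↦ V_u x is jointly measurable. Let d ≥ 1 and let P : G × X → S¹ be a phase polynomial of degree < d such that for every g ∈ G the function P(g, ·) takes only finitely many values (modulo null sets). Then P is invariant under the action of U: for every u ∈ U and g ∈ G, P(g, V_u x) = P(g, x) for μ-a.e. x. -/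
open MeasureTheory
open scoped symmDiff Pointwise ENNReal

section Aux

variable {X : Type*} [MeasurableSpace X] {μ : Measure X} [IsProbabilityMeasure μ]

/-- Two constants that agree almost everywhere (w.r.t. a probability measure) are equal. -/
lemma ae_const_eq {α : Type*} {a b : α} (h : ∀ᵐ _x ∂μ, a = b) : a = b := by
  haveI : (MeasureTheory.ae μ).NeBot := ae_neBot.2 (IsProbabilityMeasure.ne_zero μ)
  exact h.exists.choose_spec

/-- Pull back an a.e. statement through a measure preserving map. -/
lemma ae_comp_mp {f : X → X} (hf : MeasurePreserving f μ μ) {p : X → Prop}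
    (hp : MeasurableSet {x | p x}) (h : ∀ᵐ x ∂μ, p x) : ∀ᵐ x ∂μ, p (f x) := by
  rw [← hf.map_eq] at h
  exact (ae_map_iff hf.measurable.aemeasurable hp).mp h

/-- On an ergodic system, a measurable invariant function with finitely many values
is a.e. constant. -/
lemma eq_const_of_invariant {G : Type*} (T : G → X → X)
    (herg : IsErgodicAction T μ) (ψ : X → Circle) (hψ : Measurable ψ)
    (hinv : ∀ g, ∀ᵐ x ∂μ, ψ (T g x) = ψ x)
    (S : Finset Circle) (hS : ∀ᵐ x ∂μ, ψ x ∈ S) :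
    ∃ c, ∀ᵐ x ∂μ, ψ x = c := by
  have h01 : ∀ s : Circle, μ (ψ ⁻¹' {s}) = 0 ∨ μ (ψ ⁻¹' {s}) = 1 := by
    intro s
    apply herg _ (hψ (measurableSet_singleton s))
    intro g
    have hnull : μ {x | ¬ ψ (T g x) = ψ x} = 0 := by
      have := hinv g; rwa [ae_iff] at this
    refine measure_mono_null ?_ hnull
    intro x hx
    simp only [Set.mem_symmDiff, Set.mem_preimage, Set.mem_singleton_iff] at hx
    simp only [Set.mem_setOf_eq]
    rcases hx with ⟨h1, h2⟩ | ⟨h1, h2⟩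
    · rw [h1]; exact fun hh => h2 hh.symm
    · rw [h1]; exact fun hh => h2 hh
  have hex : ∃ s ∈ S, μ (ψ ⁻¹' {s}) ≠ 0 := by
    by_contra hno
    push_neg at hno
    have hU : μ {x | ψ x ∈ S} = 0 := by
      have he : {x | ψ x ∈ S} = ⋃ s ∈ (S : Finset Circle), ψ ⁻¹' {s} := by
        ext x; simp
      rw [he]
      exact (measure_biUnion_null_iff S.countable_toSet).2 fun s hs => hno s hs
    have hc := hS
    rw [ae_iff] at hc
    have h10 : (1 : ℝ≥0∞) ≤ 0 := by
      have huniv : (Set.univ : Set X) ⊆ {x | ψ x ∈ S} ∪ {x | ¬ ψ x ∈ S} := by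
        intro x _; by_cases h : ψ x ∈ S <;> simp [h]
      calc (1 : ℝ≥0∞) = μ Set.univ := measure_univ.symm
        _ ≤ μ ({x | ψ x ∈ S} ∪ {x | ¬ ψ x ∈ S}) := measure_mono huniv
        _ ≤ μ {x | ψ x ∈ S} + μ {x | ¬ ψ x ∈ S} := measure_union_le _ _
        _ = 0 := by rw [hU, hc]; simp
    simp at h10
  obtain ⟨s, _, hs⟩ := hex
  have h1 : μ (ψ ⁻¹' {s}) = 1 := (h01 s).resolve_left hs
  refine ⟨s, ?_⟩
  rw [ae_iff]
  have he : {x | ¬ ψ x = s} = (ψ ⁻¹' {s})ᶜ := rfl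
  rw [he, prob_compl_eq_zero_iff (hψ (measurableSet_singleton s))]
  exact h1

/-- Rearrangement in a commutative group. -/
lemma commGroup_aux {H : Type*} [CommGroup H] {a b c d : H} (h : a * b⁻¹ = c * d⁻¹) :
    a * c⁻¹ = b * d⁻¹ := by
  rw [mul_inv_eq_iff_eq_mul] at h ⊢
  rw [h]
  ac_rfl

/-- The key inductive statement: a finite-valued phase polynomial of degree `< d` on an
ergodic system is invariant under a commuting, jointly measurable action of a compact
connected metrizable abelian group. -/
lemma main_ind
    {G : Type*}
    {X : Type*} [MeasurableSpace X] (μ : Measure X) [IsProbabilityMeasure μ]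
    {U : Type*} [CommGroup U] [TopologicalSpace U] [IsTopologicalGroup U]
    [CompactSpace U] [ConnectedSpace U] [TopologicalSpace.MetrizableSpace U]
    [MeasurableSpace U] [BorelSpace U]
    (T : G → X → X) (hT : ∀ g, MeasurePreserving (T g) μ μ)
    (herg : IsErgodicAction T μ)
    (V : U → X → X) (hV : ∀ u, MeasurePreserving (V u) μ μ)
    (hVjoint : Measurable (fun q : U × X => V q.1 q.2))
    (hV1 : ∀ᵐ x ∂μ, V 1 x = x)
    (hVmul : ∀ u v, ∀ᵐ x ∂μ, V (u * v) x = V u (V v x))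
    (hVcomm : ∀ u g, ∀ᵐ x ∂μ, V u (T g x) = T g (V u x))
    (d : ℕ) :
    ∀ φ : X → Circle, Measurable φ → PhasePoly T μ d φ →
      (∃ S : Finset Circle, ∀ᵐ x ∂μ, φ x ∈ S) → ∀ u, ∀ᵐ x ∂μ, φ (V u x) = φ x := by
  induction d with
  | zero =>
    intro φ hφ hpoly _ u
    have h1 : ∀ᵐ x ∂μ, φ x = 1 := hpoly
    have h2 : ∀ᵐ x ∂μ, φ (V u x) = 1 :=
      ae_comp_mp (hV u) (hφ (measurableSet_singleton 1)) h1
    filter_upwards [h1, h2] with x e1 e2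
    rw [e1, e2]
  | succ d ih =>
    intro φ hφ hpoly hfin u
    classical
    obtain ⟨S, hS⟩ := hfin
    have hpoly' : ∀ g, PhasePoly T μ d (fun x => φ (T g x) * (φ x)⁻¹) := hpoly
    have hSmeas : MeasurableSet (φ ⁻¹' (S : Set Circle)) :=
      hφ S.finite_toSet.measurableSet
    set F₂ : Finset Circle := (S ×ˢ S).image (fun p => p.1 * p.2⁻¹) with hF₂
    -- the derivatives take finitely many values
    have hder_fin : ∀ g : G, ∀ᵐ x ∂μ, φ (T g x) * (φ x)⁻¹ ∈ F₂ := by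
      intro g
      have h1 : ∀ᵐ x ∂μ, φ (T g x) ∈ S :=
        ae_comp_mp (hT g) (p := fun x => φ x ∈ S) hSmeas hS
      filter_upwards [h1, hS] with x e1 e2
      exact Finset.mem_image.2 ⟨(_, _), Finset.mem_product.2 ⟨e1, e2⟩, rfl⟩
    have hdermeas : ∀ g : G, Measurable (fun x => φ (T g x) * (φ x)⁻¹) :=
      fun g => (hφ.comp (hT g).measurable).mul hφ.inv
    -- inductive hypothesis: derivatives are invariant under V
    have hDinv : ∀ (g : G) (u : U),
        ∀ᵐ x ∂μ, φ (T g (V u x)) * (φ (V u x))⁻¹ = φ (T g x) * (φ x)⁻¹ := by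
      intro g u
      exact ih (fun x => φ (T g x) * (φ x)⁻¹) (hdermeas g) (hpoly' g) ⟨F₂, hder_fin g⟩ u
    -- the multiplicative "difference" function
    set Q : U → X → Circle := fun u x => φ (V u x) * (φ x)⁻¹ with hQ
    have hQmeas : ∀ u, Measurable (Q u) := fun u => (hφ.comp (hV u).measurable).mul hφ.inv
    -- Q u is invariant under T
    have hQTinv : ∀ u g, ∀ᵐ x ∂μ, Q u (T g x) = Q u x := by
      intro u g
      filter_upwards [hVcomm u g, hDinv g u] with x h1 h2
      show φ (V u (T g x)) * (φ (T g x))⁻¹ = φ (V u x) * (φ x)⁻¹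
      rw [h1]
      exact commGroup_aux h2
    -- Q u takes finitely many values
    have hQF : ∀ u, ∀ᵐ x ∂μ, Q u x ∈ F₂ := by
      intro u
      have h1 : ∀ᵐ x ∂μ, φ (V u x) ∈ S :=
        ae_comp_mp (hV u) (p := fun x => φ x ∈ S) hSmeas hS
      filter_upwards [h1, hS] with x e1 e2
      exact Finset.mem_image.2 ⟨(_, _), Finset.mem_product.2 ⟨e1, e2⟩, rfl⟩
    -- by ergodicity Q u is a.e. constant
    have hconst : ∀ u, ∃ c, ∀ᵐ x ∂μ, Q u x = c := fun u =>
      eq_const_of_invariant T herg (Q u) (hQmeas u) (fun g => hQTinv u g) F₂ (hQF u)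
    choose c hc using hconst
    -- c is a homomorphism
    have c1 : c 1 = 1 := by
      have hQ1 : ∀ᵐ x ∂μ, Q 1 x = 1 := by
        filter_upwards [hV1] with x h
        show φ (V 1 x) * (φ x)⁻¹ = 1
        rw [h, mul_inv_cancel]
      exact ae_const_eq <| by
        filter_upwards [hQ1, hc 1] with x e1 e2; rw [← e2, e1]
    have hom : ∀ u v, c (u * v) = c u * c v := by
      intro u v
      have hQu : ∀ᵐ x ∂μ, Q u (V v x) = c u :=
        ae_comp_mp (hV v) (p := fun x => Q u x = c u)
          ((hQmeas u) (measurableSet_singleton (c u))) (hc u)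
      have key : ∀ᵐ x ∂μ, Q (u * v) x = c u * c v := by
        filter_upwards [hVmul u v, hQu, hc v] with x h1 h2 h3
        show φ (V (u * v) x) * (φ x)⁻¹ = c u * c v
        rw [h1, ← h2, ← h3]
        show φ (V u (V v x)) * (φ x)⁻¹
            = (φ (V u (V v x)) * (φ (V v x))⁻¹) * (φ (V v x) * (φ x)⁻¹)
        group
      exact ae_const_eq <| by
        filter_upwards [hc (u * v), key] with x e1 e2; rw [← e1, e2]
    have cinv : ∀ u, c u⁻¹ = (c u)⁻¹ := by
      intro u
      have h1 : (1 : Circle) = c u * c u⁻¹ := by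
        rw [← c1, ← hom, mul_inv_cancel]
      exact eq_inv_of_mul_eq_one_right h1.symm
    -- values of c lie in F₂
    have cF : ∀ u, c u ∈ F₂ := by
      intro u
      haveI : (MeasureTheory.ae μ).NeBot := ae_neBot.2 (IsProbabilityMeasure.ne_zero μ)
      obtain ⟨x, e1, e2⟩ := ((hc u).and (hQF u)).exists
      rw [← e1]; exact e2
    -- level sets of c are measurable
    set A : Circle → Set U := fun s => {u | μ {x | Q u x = s} = 1} with hA
    have hAmeas : ∀ s, MeasurableSet (A s) := by
      intro s
      have hjoint : Measurable fun q : U × X => Q q.1 q.2 :=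
        (hφ.comp hVjoint).mul ((hφ.comp measurable_snd).inv)
      have hset : MeasurableSet {q : U × X | Q q.1 q.2 = s} :=
        hjoint (measurableSet_singleton s)
      have hm : Measurable fun u => μ (Prod.mk u ⁻¹' {q : U × X | Q q.1 q.2 = s}) :=
        measurable_measure_prodMk_left hset
      exact hm (measurableSet_singleton 1)
    have hcA : ∀ u s, c u = s ↔ u ∈ A s := by
      intro u s
      constructor
      · rintro rfl
        show μ {x | Q u x = c u} = 1
        rw [← prob_compl_eq_zero_iff
          (show MeasurableSet {x | Q u x = c u} from (hQmeas u) (measurableSet_singleton (c u)))]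
        have h := hc u
        rw [ae_iff] at h
        exact h
      · intro hu
        have h1 : ∀ᵐ x ∂μ, Q u x = s := by
          rw [ae_iff]
          have he : {x | ¬ Q u x = s} = {x | Q u x = s}ᶜ := rfl
          rw [he, prob_compl_eq_zero_iff
            (show MeasurableSet {x | Q u x = s} from (hQmeas u) (measurableSet_singleton s))]
          exact hu
        haveI : (MeasureTheory.ae μ).NeBot := ae_neBot.2 (IsProbabilityMeasure.ne_zero μ)
        obtain ⟨x, e1, e2⟩ := ((hc u).and h1).exists
        rw [← e1, e2]
    -- Haar measure and Steinhaus
    haveI : T2Space U := TopologicalSpace.t2Space_of_metrizableSpace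
    haveI : LocallyCompactSpace U := inferInstance
    set ν : Measure U := Measure.haar with hν
    have hpos : ∃ s ∈ F₂, ν (A s) ≠ 0 := by
      by_contra hno
      push_neg at hno
      have hcover : (Set.univ : Set U) ⊆ ⋃ s ∈ F₂, A s := by
        intro w _
        exact Set.mem_biUnion (cF w) ((hcA w (c w)).1 rfl)
      have h0 : ν (⋃ s ∈ F₂, A s) = 0 :=
        (measure_biUnion_null_iff F₂.countable_toSet).2 fun s hs => hno s hs
      have huz : ν Set.univ = 0 := measure_mono_null hcover h0
      exact IsOpen.measure_ne_zero ν isOpen_univ Set.univ_nonempty huz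
    obtain ⟨s, _, hs0⟩ := hpos
    have hnhds : A s / A s ∈ nhds (1 : U) :=
      Measure.div_mem_nhds_one_of_haar_pos ν (A s) (hAmeas s) (pos_iff_ne_zero.2 hs0)
    -- the stabilizer subgroup
    set K : Subgroup U :=
      { carrier := {u | c u = 1}
        one_mem' := c1
        mul_mem' := fun {a b} ha hb => by
          show c (a * b) = 1
          rw [hom a b, show c a = 1 from ha, show c b = 1 from hb, mul_one]
        inv_mem' := fun {a} ha => by
          show c a⁻¹ = 1
          rw [cinv, show c a = 1 from ha, inv_one] } with hK
    have hsub : A s / A s ⊆ (K : Set U) := by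
      intro w hw
      rw [Set.mem_div] at hw
      obtain ⟨a, haA, b, hbA, rfl⟩ := hw
      show c (a / b) = 1
      have ea : c a = s := (hcA a s).2 haA
      have eb : c b = s := (hcA b s).2 hbA
      rw [div_eq_mul_inv, hom, cinv, ea, eb, mul_inv_cancel]
    have hopen : IsOpen (K : Set U) :=
      Subgroup.isOpen_of_mem_nhds K (Filter.mem_of_superset hnhds hsub)
    have hclosed : IsClosed (K : Set U) := Subgroup.isClosed_of_isOpen K hopen
    have huniv : (K : Set U) = Set.univ :=
      IsClopen.eq_univ ⟨hclosed, hopen⟩ ⟨1, K.one_mem⟩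
    have hc1 : c u = 1 := by
      have hu : u ∈ (K : Set U) := huniv ▸ Set.mem_univ u
      exact hu
    filter_upwards [hc u] with x e
    rw [hc1] at e
    exact mul_inv_eq_one.mp e

end Aux

/-- Let `G` be a countable discrete abelian group, `X` an ergodic
`G`-system, and `U` a compact *connected* metrizable abelian group acting on `X` by
measure-preserving transformations `V_u` commuting with the `G`-action, jointly measurably.
Let `d ≥ 1` and let `P : G × X → S¹` be a phase polynomial of degree `< d` such that each
`P (g, ·)` takes only finitely many values modulo null sets.  Then `P` is invariant under
the action of `U`. -/
theorem phase_polynomial_invariant_under_connected_group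
    {G : Type*} [AddCommGroup G] [Countable G]
    {X : Type*} [MeasurableSpace X] (μ : Measure X) [IsProbabilityMeasure μ]
    {U : Type*} [CommGroup U] [TopologicalSpace U] [IsTopologicalGroup U]
    [CompactSpace U] [ConnectedSpace U] [TopologicalSpace.MetrizableSpace U]
    [MeasurableSpace U] [BorelSpace U]
    (T : G → X → X)
    (hT : ∀ g, MeasurePreserving (T g) μ μ)
    (hT0 : T 0 = id) (hTadd : ∀ g g', T (g + g') = T g ∘ T g')
    (herg : IsErgodicAction T μ)
    (V : U → X → X)
    (hV : ∀ u, MeasurePreserving (V u) μ μ)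
    (hVjoint : Measurable (fun q : U × X => V q.1 q.2))
    (hV1 : ∀ᵐ x ∂μ, V 1 x = x)
    (hVmul : ∀ u v, ∀ᵐ x ∂μ, V (u * v) x = V u (V v x))
    (hVcomm : ∀ u g, ∀ᵐ x ∂μ, V u (T g x) = T g (V u x))
    (d : ℕ) (hd : 1 ≤ d)
    (P : G → X → Circle)
    (hPmeas : ∀ g, Measurable (P g))
    (hPpoly : ∀ g, PhasePoly T μ d (P g))
    (hPfin : ∀ g, ∃ S : Finset Circle, ∀ᵐ x ∂μ, P g x ∈ S) :
    ∀ (u : U) (g : G), ∀ᵐ x ∂μ, P g (V u x) = P g x := by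
  intro u g
  exact main_ind μ T hT herg V hV hVjoint hV1 hVmul hVcomm d (P g)
    (hPmeas g) (hPpoly g) (hPfin g) u
end

section
/- Let I be a countable index set, let (q_i)_{i∈I} be a family of (not necessarily distinct) primes, and let G = ⨁_{i∈I} ℤ/q_iℤ. Let X be an ergodic G-system, let F : X → S¹ be a phase polynomial of degree < k, let p be a prime with p ≥ k, and let m ≥ 1 be such that F(x)^{p^m} = 1 for μ-a.e. x. Then there exists a constant c ∈ S¹ such that (F(x) · conj(c))^p = 1 for μ-a.e. x; that is, up to multiplication by a constant, F takes values in the p-th roots of unity. -/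
open MeasureTheory
open scoped symmDiff

section PPHCAux
open Finset
open scoped ENNReal

lemma prodPascalPPHC {M : Type*} [CommMonoid M] (A : ℕ → M) (n : ℕ) :
    (∏ j ∈ range (n + 1), A j ^ n.choose j) *
      ∏ j ∈ range (n + 1), A (j + 1) ^ n.choose j
      = ∏ j ∈ range (n + 2), A j ^ (n + 1).choose j := by
  rw [prod_range_succ' (fun j => A j ^ (n + 1).choose j) (n + 1)]
  simp only [Nat.choose_succ_succ, pow_add, prod_mul_distrib, Nat.choose_zero_right, pow_one]
  have h : (∏ j ∈ range (n + 1), A (j + 1) ^ n.choose (j + 1)) * A 0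
      = ∏ j ∈ range (n + 1), A j ^ n.choose j := by
    have := prod_range_succ' (fun j => A j ^ n.choose j) (n + 1)
    rw [prod_range_succ] at this
    simpa using this.symm
  calc (∏ j ∈ range (n + 1), A j ^ n.choose j) *
      ∏ j ∈ range (n + 1), A (j + 1) ^ n.choose j
      = (∏ j ∈ range (n + 1), A (j + 1) ^ n.choose j) *
        ((∏ j ∈ range (n + 1), A (j + 1) ^ n.choose (j + 1)) * A 0) := by
        rw [h]; ring_nf; rw [mul_comm]
    _ = _ := by rw [mul_assoc]

noncomputable def DD {G X : Type*} (T : G → X → X) (g : G) (φ : X → Circle) : X → Circle :=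
  fun x => φ (T g x) * (φ x)⁻¹

section Helpers
set_option linter.unusedSectionVars false
variable {G X : Type*} [MeasurableSpace X] {μ : Measure X} {T : G → X → X}

lemma ae_comp {f : X → X} (hf : MeasurePreserving f μ μ) {P : X → Prop}
    (h : ∀ᵐ x ∂μ, P x) : ∀ᵐ x ∂μ, P (f x) :=
  hf.quasiMeasurePreserving.tendsto_ae.eventually h

lemma DD_pow (T : G → X → X) (g : G) (φ : X → Circle) (n : ℕ) :
    DD T g (fun x => φ x ^ n) = fun x => (DD T g φ x) ^ n := by
  funext x; simp [DD, mul_pow, inv_pow]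

lemma shift_eq (T : G → X → X) (g : G) (φ : X → Circle) (x : X) :
    φ (T g x) = DD T g φ x * φ x := by
  simp [DD, mul_assoc]

lemma DD_ae_const (hT : ∀ g, MeasurePreserving (T g) μ μ) (g : G) {φ : X → Circle}
    {c : Circle} (h : ∀ᵐ x ∂μ, φ x = c) : ∀ᵐ x ∂μ, DD T g φ x = 1 := by
  filter_upwards [h, ae_comp (hT g) h] with x h1 h2
  simp [DD, h1, h2]

lemma binomPPHC (T : G → X → X) (g : G) :
    ∀ (n : ℕ) (φ : X → Circle) (x : X),
      φ ((T g)^[n] x) = ∏ j ∈ range (n + 1), ((DD T g)^[j] φ x) ^ n.choose j := by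
  intro n
  induction n with
  | zero => intro φ x; simp
  | succ n ih =>
    intro φ x
    have h1 : φ ((T g)^[n+1] x) = φ ((T g)^[n] (T g x)) := by
      rw [Function.iterate_succ_apply]
    rw [h1, ih φ (T g x)]
    have h2 : ∀ j : ℕ, (DD T g)^[j] φ (T g x)
        = (DD T g)^[j] φ x * (DD T g)^[j+1] φ x := by
      intro j
      rw [Function.iterate_succ_apply']
      rw [shift_eq T g ((DD T g)^[j] φ) x, mul_comm]
    calc ∏ j ∈ range (n + 1), ((DD T g)^[j] φ (T g x)) ^ n.choose j
        = (∏ j ∈ range (n + 1), ((DD T g)^[j] φ x) ^ n.choose j) *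
          ∏ j ∈ range (n + 1), ((DD T g)^[j+1] φ x) ^ n.choose j := by
          rw [← prod_mul_distrib]; exact prod_congr rfl fun j _ => by rw [h2, mul_pow]
      _ = _ := prodPascalPPHC (fun j => (DD T g)^[j] φ x) n

lemma iterate_TPPHC {G : Type*} [AddMonoid G] {X : Type*} (T : G → X → X)
    (hT0 : T 0 = id) (hTadd : ∀ g g', T (g + g') = T g ∘ T g') (g : G) :
    ∀ n : ℕ, (T g)^[n] = T (n • g)
  | 0 => by simp [hT0]
  | (n+1) => by
    rw [Function.iterate_succ', iterate_TPPHC T hT0 hTadd g n, succ_nsmul', hTadd]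

lemma phasePoly_iter (hT : ∀ g, MeasurePreserving (T g) μ μ) (g : G) :
    ∀ (n : ℕ) (φ : X → Circle), PhasePoly T μ n φ → ∀ᵐ x ∂μ, (DD T g)^[n] φ x = 1
  | 0, φ, h => h
  | (n+1), φ, h => by
    rw [Function.iterate_succ_apply]
    exact phasePoly_iter hT g n (DD T g φ) (h g)

lemma phasePoly_iter_ge (hT : ∀ g, MeasurePreserving (T g) μ μ) (g : G)
    {n : ℕ} {φ : X → Circle} (h : PhasePoly T μ n φ) {j : ℕ} (hj : n ≤ j) :
    ∀ᵐ x ∂μ, (DD T g)^[j] φ x = 1 := by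
  obtain ⟨i, rfl⟩ := Nat.exists_eq_add_of_le hj
  rw [add_comm]
  have hbase := phasePoly_iter hT g n φ h
  induction i with
  | zero => simpa using hbase
  | succ i ih =>
    have heq : (DD T g)^[i + 1 + n] φ = DD T g ((DD T g)^[i+n] φ) := by
      rw [show i + 1 + n = (i + n) + 1 by ring, Function.iterate_succ']; rfl
    rw [heq]
    exact DD_ae_const hT g (ih (Nat.le_add_right n i))

lemma ae_const_of_invariant (hprob : IsProbabilityMeasure μ)
    (herg : IsErgodicAction T μ) {Φ : X → Circle} (hmeas : Measurable Φ)
    {n : ℕ} (hn : 0 < n) (hroots : ∀ᵐ x ∂μ, Φ x ^ n = 1)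
    (hinv : ∀ g : G, ∀ᵐ x ∂μ, Φ (T g x) = Φ x) :
    ∃ c : Circle, ∀ᵐ x ∂μ, Φ x = c := by
  classical
  have hSfin : {z : Circle | z ^ n = 1}.Finite := by
    have h1 : {w : ℂ | w ^ n = 1}.Finite := by
      have hsub : {w : ℂ | w ^ n = 1} ⊆ (Polynomial.X ^ n - Polynomial.C 1 : Polynomial ℂ).rootSet ℂ := by
        intro w hw
        rw [Polynomial.mem_rootSet]
        refine ⟨Polynomial.X_pow_sub_C_ne_zero hn 1, ?_⟩
        simp [Polynomial.aeval_def, hw.out]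
      exact ((Polynomial.X ^ n - Polynomial.C 1 : Polynomial ℂ).rootSet ℂ).toFinite.subset hsub
    have hsub2 : {z : Circle | z ^ n = 1} ⊆ ((↑) : Circle → ℂ) ⁻¹' {w : ℂ | w ^ n = 1} := by
      intro z hz
      show ((z : ℂ)) ^ n = 1
      rw [show ((z : ℂ)) ^ n = ((z ^ n : Circle) : ℂ) from (map_pow Circle.coeHom z n).symm, hz.out]
      simp
    exact (h1.preimage (Circle.coe_injective.injOn)).subset hsub2
  have hlevel : ∀ z : Circle, μ (Φ ⁻¹' {z}) = 0 ∨ μ (Φ ⁻¹' {z}) = 1 := by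
    intro z
    refine herg _ (hmeas (measurableSet_singleton z)) fun g => ?_
    refine measure_mono_null (fun x hx => ?_) ((ae_iff).mp (hinv g))
    rw [Set.mem_symmDiff] at hx
    simp only [Set.mem_preimage, Set.mem_singleton_iff] at hx
    simp only [Set.mem_setOf_eq]
    rcases hx with ⟨h1, h2⟩ | ⟨h1, h2⟩
    · exact fun h => h2 (h.symm.trans h1)
    · exact fun h => h2 (h.trans h1)
  have hexists : ∃ z : Circle, μ (Φ ⁻¹' {z}) = 1 := by
    by_contra hcon
    push_neg at hcon
    have hz0 : ∀ z : Circle, μ (Φ ⁻¹' {z}) = 0 := fun z => (hlevel z).resolve_right (hcon z)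
    have hcover : {x | Φ x ^ n = 1} ⊆ ⋃ z ∈ {z : Circle | z ^ n = 1}, Φ ⁻¹' {z} :=
      fun x hx => Set.mem_biUnion hx.out rfl
    have hU : μ (⋃ z ∈ {z : Circle | z ^ n = 1}, Φ ⁻¹' {z}) = 0 := by
      rw [measure_biUnion_null_iff hSfin.countable]
      exact fun z _ => hz0 z
    have h1 : μ {x | Φ x ^ n = 1} = 0 := measure_mono_null hcover hU
    have h2 : μ {x | ¬ Φ x ^ n = 1} = 0 := (ae_iff).mp hroots
    have huniv : (1 : ℝ≥0∞) = μ Set.univ := (measure_univ (μ := μ)).symm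
    rw [show (Set.univ : Set X) = {x | Φ x ^ n = 1} ∪ {x | ¬ Φ x ^ n = 1} by
      ext x; simp [em]] at huniv
    have := huniv.trans_le (measure_union_le _ _)
    rw [h1, h2] at this
    simp at this
  obtain ⟨z, hz⟩ := hexists
  refine ⟨z, ?_⟩
  have hcompl : μ (Φ ⁻¹' {z})ᶜ = 0 := by
    rw [prob_compl_eq_zero_iff (hmeas (measurableSet_singleton z))]
    exact hz
  rw [ae_iff]
  refine measure_mono_null (fun x hx => ?_) hcompl
  simpa using hx

end Helpers

lemma keyPPHC {I : Type*} (q : I → ℕ) (hq : ∀ i, (q i).Prime)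
    {X : Type*} [MeasurableSpace X] (μ : Measure X) [IsProbabilityMeasure μ]
    (T : (Π₀ i : I, ZMod (q i)) → X → X)
    (hT : ∀ g, MeasurePreserving (T g) μ μ)
    (hT0 : T 0 = id) (hTadd : ∀ g g', T (g + g') = T g ∘ T g')
    (herg : IsErgodicAction T μ)
    (p : ℕ) (hp : p.Prime) (m : ℕ) :
    ∀ k : ℕ, k ≤ p → ∀ F : X → Circle, Measurable F → PhasePoly T μ k F →
      (∀ᵐ x ∂μ, F x ^ (p ^ m) = 1) → ∃ c : Circle, ∀ᵐ x ∂μ, F x ^ p = c := by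
  classical
  have hae : (ae μ).NeBot := ae_neBot.mpr (IsProbabilityMeasure.ne_zero μ)
  intro k
  induction k with
  | zero =>
    intro _ F _ hpoly _
    have h1 : ∀ᵐ x ∂μ, F x = 1 := hpoly
    exact ⟨1, by filter_upwards [h1] with x hx; simp [hx]⟩
  | succ k ih =>
    intro hkp F hFmeas hFpoly hval
    -- Step 1: eigenvalues for each g via induction hypothesis
    have hlam0 : ∀ g, ∃ lam : Circle, ∀ᵐ x ∂μ, (DD T g F x) ^ p = lam := by
      intro g
      have hmeas' : Measurable (DD T g F) := (hFmeas.comp (hT g).measurable).mul hFmeas.inv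
      have hpoly' : PhasePoly T μ k (DD T g F) := hFpoly g
      have hval' : ∀ᵐ x ∂μ, (DD T g F x) ^ (p ^ m) = 1 := by
        filter_upwards [hval, ae_comp (hT g) hval] with x h1 h2
        simp [DD, mul_pow, inv_pow, h1, h2]
      exact ih (le_of_lt (Nat.lt_of_succ_le hkp)) (DD T g F) hmeas' hpoly' hval'
    choose lam hlam using hlam0
    have hshift : ∀ g, ∀ᵐ x ∂μ, F (T g x) ^ p = lam g * F x ^ p := by
      intro g
      filter_upwards [hlam g] with x hx
      rw [← hx, DD, mul_pow, inv_pow, inv_mul_cancel_right]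
    -- Step 2: lam g ^ (p ^ m) = 1
    have hlam_pow : ∀ g, lam g ^ (p ^ m) = 1 := by
      intro g
      have h : ∀ᵐ x ∂μ, lam g ^ (p ^ m) = 1 := by
        filter_upwards [hlam g, hval, ae_comp (hT g) hval] with x h1 h2 h3
        have e1 : lam g ^ (p ^ m) = ((DD T g F x) ^ p) ^ (p ^ m) := by rw [h1]
        rw [e1, ← pow_mul, mul_comm, pow_mul]
        have e2 : DD T g F x ^ p ^ m = 1 := by simp [DD, mul_pow, inv_pow, h2, h3]
        rw [e2, one_pow]
      exact h.exists.choose_spec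
    -- Step 3: lam is a homomorphism
    have hlam0' : lam 0 = 1 := by
      have h := hshift 0
      rw [hT0] at h
      have h2 : ∀ᵐ x ∂μ, lam 0 * F x ^ p = 1 * F x ^ p := by
        filter_upwards [h] with x hx
        simp only [id_eq] at hx
        rw [← hx, one_mul]
      obtain ⟨x, hx⟩ := h2.exists
      exact mul_right_cancel hx
    have hlam_mul : ∀ g g', lam (g + g') = lam g * lam g' := by
      intro g g'
      have hA : ∀ᵐ x ∂μ, F (T g (T g' x)) ^ p = lam g * F (T g' x) ^ p :=
        ae_comp (hT g') (hshift g)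
      have h2 : ∀ᵐ x ∂μ, lam (g + g') * F x ^ p = (lam g * lam g') * F x ^ p := by
        filter_upwards [hA, hshift g', hshift (g + g')] with x h1 h2 h3
        rw [← h3, hTadd, Function.comp_apply, h1, h2, mul_assoc]
      obtain ⟨x, hx⟩ := h2.exists
      exact mul_right_cancel hx
    have hlam_nsmul : ∀ (g) (n : ℕ), lam (n • g) = lam g ^ n := by
      intro g n
      induction n with
      | zero => simpa using hlam0'
      | succ n ihn => rw [succ_nsmul, hlam_mul, ihn, pow_succ]
    -- Step 4: binomial argument: lam g = 1 for p-torsion g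
    have hlam_p_tor : ∀ g, p • g = 0 → lam g = 1 := by
      intro g hg
      have hpt : ∀ x, F x = ∏ j ∈ range (p + 1), ((DD T g)^[j] F x) ^ p.choose j := by
        intro x
        have h := binomPPHC T g p F x
        rwa [iterate_TPPHC T hT0 hTadd g p, hg, hT0, id_eq] at h
      have hstep : ∀ (ψ : X → Circle) (c : Circle), (∀ᵐ x ∂μ, ψ x ^ p = c) →
          ∀ᵐ x ∂μ, (DD T g ψ x) ^ p = 1 := by
        intro ψ c h
        have h2 : ∀ᵐ x ∂μ, DD T g (fun y => ψ y ^ p) x = 1 := DD_ae_const hT g h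
        filter_upwards [h2] with x hx
        have e := congrFun (DD_pow T g ψ p) x
        rw [← e]
        exact hx
      have hB : ∀ i : ℕ, ∀ᵐ x ∂μ, ((DD T g)^[i + 2] F x) ^ p = 1 := by
        intro i
        induction i with
        | zero =>
          have h := hstep (DD T g F) (lam g) (hlam g)
          have heq : (DD T g)^[0 + 2] F = DD T g (DD T g F) := by
            rw [show 0 + 2 = 1 + 1 from rfl, Function.iterate_succ', Function.iterate_one]
            rfl
          rw [heq]
          exact h
        | succ i ihi =>
          have h := hstep ((DD T g)^[i + 2] F) 1 ihi
          have heq : (DD T g)^[i + 1 + 2] F = DD T g ((DD T g)^[i + 2] F) := by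
            rw [show i + 1 + 2 = (i + 2) + 1 by ring, Function.iterate_succ']
            rfl
          rw [heq]
          exact h
      have hC : ∀ᵐ x ∂μ, (DD T g)^[p] F x = 1 := phasePoly_iter_ge hT g hFpoly hkp
      have hall : ∀ᵐ x ∂μ, ∀ j ∈ (↑(Finset.Ico 2 p) : Set ℕ), ((DD T g)^[j] F x) ^ p = 1 := by
        rw [Filter.eventually_all_finite (Finset.Ico 2 p).finite_toSet]
        intro j hj
        have h2j : 2 ≤ j := (Finset.mem_Ico.mp (Finset.mem_coe.mp hj)).1
        obtain ⟨i, rfl⟩ := Nat.exists_eq_add_of_le h2j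
        have h := hB i
        rwa [show i + 2 = 2 + i from by ring] at h
      have hconc : ∀ᵐ x ∂μ, lam g = 1 := by
        filter_upwards [hlam g, hC, hall] with x hAx hCx hallx
        have h0 := hpt x
        rw [prod_range_succ' (fun j => ((DD T g)^[j] F x) ^ p.choose j) p] at h0
        simp only [Function.iterate_zero_apply, Nat.choose_zero_right, pow_one] at h0
        have h1 : ∏ j ∈ range p, ((DD T g)^[j + 1] F x) ^ p.choose (j + 1) = 1 :=
          right_eq_mul.mp h0
        have hsingle : ∏ j ∈ range p, ((DD T g)^[j + 1] F x) ^ p.choose (j + 1)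
            = ((DD T g)^[0 + 1] F x) ^ p.choose (0 + 1) := by
          refine Finset.prod_eq_single_of_mem 0 (Finset.mem_range.mpr hp.pos) ?_
          intro j hj hj0
          by_cases hjp : j + 1 = p
          · rw [hjp, Nat.choose_self, pow_one]
            exact hCx
          · have hlt : j + 1 < p := by
              have := Finset.mem_range.mp hj; omega
            obtain ⟨b, hb⟩ := hp.dvd_choose_self (Nat.succ_ne_zero j) hlt
            rw [hb, pow_mul, hallx (j + 1) (Finset.mem_coe.mpr (Finset.mem_Ico.mpr ⟨by omega, hlt⟩)), one_pow]
        rw [hsingle] at h1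
        simp only [zero_add, Function.iterate_one, Nat.choose_one_right] at h1
        rw [hAx] at h1
        exact h1
      exact hconc.exists.choose_spec
    -- Step 5: lam g = 1 for all g, by splitting into p-part and coprime part
    have hlam_one : ∀ g, lam g = 1 := by
      intro g
      set g1 := g.filter (fun i => q i = p) with hg1
      set g2 := g.filter (fun i => ¬ q i = p) with hg2
      have hsplit : g1 + g2 = g := by
        ext i
        by_cases h : q i = p <;> simp [hg1, hg2, DFinsupp.filter_apply, h]
      have hptor : p • g1 = 0 := by
        ext i
        have e : (p • g1) i = p • (g1 i) := by
          exact map_nsmul (DFinsupp.evalAddMonoidHom i) p g1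
        rw [e, DFinsupp.zero_apply]
        by_cases hqi : q i = p
        · have hz : (p : ZMod (q i)) = 0 := by rw [← hqi]; exact ZMod.natCast_self (q i)
          rw [nsmul_eq_mul, hz, zero_mul]
        · have : g1 i = 0 := by simp [hg1, DFinsupp.filter_apply, hqi]
          rw [this, smul_zero]
      set n2 := ∏ i ∈ g2.support, q i with hn2
      have hsupp2 : ∀ i ∈ g2.support, q i ≠ p := by
        intro i hi hqp
        apply DFinsupp.mem_support_iff.mp hi
        simp [hg2, DFinsupp.filter_apply, hqp]
      have hcop : Nat.Coprime n2 p := by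
        apply Nat.coprime_prod_left_iff.mpr
        intro i hi
        exact (Nat.coprime_primes (hq i) hp).mpr (hsupp2 i hi)
      have h2tor : n2 • g2 = 0 := by
        ext i
        have e : (n2 • g2) i = n2 • (g2 i) := by
          exact map_nsmul (DFinsupp.evalAddMonoidHom i) n2 g2
        rw [e, DFinsupp.zero_apply]
        by_cases hi : i ∈ g2.support
        · have hdvd : q i ∣ n2 := Finset.dvd_prod_of_mem q hi
          have hz : (n2 : ZMod (q i)) = 0 := (ZMod.natCast_eq_zero_iff n2 (q i)).mpr hdvd
          rw [nsmul_eq_mul, hz, zero_mul]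
        · have : g2 i = 0 := DFinsupp.notMem_support_iff.mp hi
          rw [this, smul_zero]
      have hg2one : lam g2 = 1 := by
        have h1 : lam g2 ^ n2 = 1 := by
          rw [← hlam_nsmul, h2tor, hlam0']
        have h2 : lam g2 ^ (p ^ m) = 1 := hlam_pow g2
        have hd1 : orderOf (lam g2) ∣ n2 := orderOf_dvd_of_pow_eq_one h1
        have hd2 : orderOf (lam g2) ∣ p ^ m := orderOf_dvd_of_pow_eq_one h2
        have : orderOf (lam g2) ∣ Nat.gcd n2 (p ^ m) := Nat.dvd_gcd hd1 hd2
        rw [Nat.Coprime.gcd_eq_one (hcop.pow_right m)] at this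
        exact orderOf_eq_one_iff.mp (Nat.dvd_one.mp this)
      have hg1one : lam g1 = 1 := hlam_p_tor g1 hptor
      rw [← hsplit, hlam_mul, hg1one, hg2one, one_mul]
    -- Step 6: F^p is invariant, hence a.e. constant by ergodicity
    have hinv : ∀ g, ∀ᵐ x ∂μ, (fun y => F y ^ p) (T g x) = (fun y => F y ^ p) x := by
      intro g
      filter_upwards [hshift g] with x hx
      simpa [hlam_one g, one_mul] using hx
    have hΦmeas : Measurable fun x => F x ^ p := hFmeas.pow_const p
    have hroots : ∀ᵐ x ∂μ, (fun y => F y ^ p) x ^ (p ^ m) = 1 := by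
      filter_upwards [hval] with x hx
      show (F x ^ p) ^ (p ^ m) = 1
      rw [← pow_mul, mul_comm, pow_mul, hx, one_pow]
    exact ae_const_of_invariant inferInstance herg hΦmeas
      (Nat.pow_pos hp.pos) hroots hinv

end PPHCAux

/-- Let `G = ⨁_{i∈I} ℤ/q_iℤ` for a countable family of primes `(q_i)`,
let `X` be an ergodic `G`-system, `F : X → S¹` a phase polynomial of degree `< k`, `p` a
prime with `p ≥ k`, and `m ≥ 1` with `F(x)^{p^m} = 1` a.e.  Then there is a constant
`c ∈ S¹` with `(F(x) · conj c)^p = 1` a.e., i.e. up to a constant `F` takes values in the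
`p`-th roots of unity. -/
theorem phase_polynomial_high_characteristic_values
    {I : Type*} [Countable I] (q : I → ℕ) (hq : ∀ i, (q i).Prime)
    {X : Type*} [MeasurableSpace X] (μ : Measure X) [IsProbabilityMeasure μ]
    (T : (Π₀ i : I, ZMod (q i)) → X → X)
    (hT : ∀ g, MeasurePreserving (T g) μ μ)
    (hT0 : T 0 = id) (hTadd : ∀ g g', T (g + g') = T g ∘ T g')
    (herg : IsErgodicAction T μ)
    (k : ℕ) (F : X → Circle) (hFmeas : Measurable F)
    (hFpoly : PhasePoly T μ k F)
    (p : ℕ) (hp : p.Prime) (hpk : k ≤ p)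
    (m : ℕ) (hm : 1 ≤ m)
    (hval : ∀ᵐ x ∂μ, F x ^ (p ^ m) = 1) :
    ∃ c : Circle, ∀ᵐ x ∂μ, (F x * c⁻¹) ^ p = 1 := by
  obtain ⟨c, hc⟩ := keyPPHC q hq μ T hT hT0 hTadd herg p hp m k hpk F hFmeas hFpoly hval
  obtain ⟨w, hw⟩ := IsAlgClosed.exists_pow_nat_eq (k := ℂ) (c : ℂ) hp.pos
  have h1 : ‖w‖ ^ p = 1 := by
    rw [← norm_pow, hw]; exact Circle.norm_coe c
  have habs : ‖w‖ = 1 := by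
    rcases lt_trichotomy (‖w‖) 1 with h | h | h
    · exfalso
      have := pow_lt_one₀ (norm_nonneg w) h hp.ne_zero
      rw [h1] at this; exact lt_irrefl 1 this
    · exact h
    · exfalso
      have := one_lt_pow₀ h hp.ne_zero
      rw [h1] at this; exact lt_irrefl 1 this
  have hmem : w ∈ Submonoid.unitSphere ℂ := by
    simp only [Submonoid.unitSphere, Submonoid.mem_mk, Subsemigroup.mem_mk,
      Metric.mem_sphere, dist_zero_right]
    exact habs
  let cr : Circle := ⟨w, hmem⟩
  refine ⟨cr, ?_⟩
  have hcr : cr ^ p = c := by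
    apply Circle.ext
    exact (map_pow Circle.coeHom cr p).trans hw
  filter_upwards [hc] with x hx
  have hgoal : (F x * cr⁻¹) ^ p = c * c⁻¹ := by
    rw [mul_pow, inv_pow, hx, hcr]
  rw [hgoal]
  simp
end

section
/- For every prime p and integers d, m, n ≥ 1 there exists a constant C = C(p, d, m, n) with the following property. Let I be a countable index set, let (q_i)_{i∈I} be a family of primes, let G = ⨁_{i∈I} ℤ/q_iℤ, let X be an ergodic G-system, and let φ₁, …, φ_m : X → S¹ be phase polynomials of degree < d satisfying φ_i(x)^{p^d} = 1 for μ-a.e. x (i = 1, …, m). Then for every function F : (μ_{p^d})^m → μ_{p^n}, where μ_N denotes the group of N-th roots of unity in S¹, the composite x ↦ F(φ₁(x), …, φ_m(x)) is a phase polynomial of degree < C. -/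
open MeasureTheory
open scoped symmDiff

/-- Pointwise "additive polynomial of degree `< k`" predicate for functions on an
additive group acting on itself by translation. -/
def DPoly {A W : Type*} [Add A] [AddCommGroup W] : ℕ → (A → W) → Prop
  | 0, F => ∀ a, F a = 0
  | (k + 1), F => ∀ v : A, DPoly k (fun a => F (a + v) - F a)

namespace DPoly

variable {A W : Type*} [AddCommGroup A] [AddCommGroup W]

theorem congr {k : ℕ} {F G : A → W} (h : F = G) (hF : DPoly k F) : DPoly k G := h ▸ hF

theorem zero_fun : ∀ k : ℕ, DPoly k (fun _ : A => (0 : W))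
  | 0 => fun _ => rfl
  | (k+1) => fun _ => congr (funext fun _ => by rw [sub_zero]) (zero_fun k)

theorem mono {k : ℕ} {F : A → W} (hF : DPoly k F) : DPoly (k + 1) F := by
  induction k generalizing F with
  | zero =>
      intro v
      refine congr (funext fun a => ?_) (zero_fun 0)
      show (0 : W) = F (a + v) - F a
      rw [hF, hF, sub_zero]
  | succ k ih => exact fun v => ih (hF v)

theorem of_le {k k' : ℕ} (h : k ≤ k') {F : A → W} (hF : DPoly k F) : DPoly k' F := by
  induction h with
  | refl => exact hF
  | step _ ih => exact ih.mono

theorem add {k : ℕ} {F G : A → W} (hF : DPoly k F) (hG : DPoly k G) :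
    DPoly k (fun a => F a + G a) := by
  induction k generalizing F G with
  | zero => intro a; show F a + G a = 0; rw [hF a, hG a, add_zero]
  | succ k ih =>
      intro v
      refine congr (funext fun a => ?_) (ih (hF v) (hG v))
      show F (a + v) - F a + (G (a + v) - G a) = F (a + v) + G (a + v) - (F a + G a)
      abel

theorem shift {k : ℕ} {F : A → W} (hF : DPoly k F) (w : A) :
    DPoly k (fun a => F (a + w)) := by
  induction k generalizing F with
  | zero => exact fun a => hF (a + w)
  | succ k ih =>
      intro v
      refine congr (funext fun a => ?_) (ih (hF v) )
      show F (a + w + v) - F (a + w) = F (a + v + w) - F (a + w)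
      rw [add_right_comm]

theorem sum {ι : Type*} (s : Finset ι) {k : ℕ} {F : ι → A → W}
    (h : ∀ i ∈ s, DPoly k (F i)) : DPoly k (fun a => ∑ i ∈ s, F i a) := by
  classical
  induction s using Finset.induction_on with
  | empty => exact congr (funext fun a => by simp) (zero_fun k)
  | @insert x s' hx ih =>
      refine congr (funext fun a => ?_)
        (((h x (Finset.mem_insert_self x s')).add
          (ih fun i hi => h i (Finset.mem_insert_of_mem hi))))
      rw [Finset.sum_insert hx]

theorem comp_addHom {B : Type*} [AddCommGroup B] {π : B → A}
    (hπ : ∀ x y, π (x + y) = π x + π y) {k : ℕ} {F : A → W} (hF : DPoly k F) :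
    DPoly k (fun b => F (π b)) := by
  induction k generalizing F with
  | zero => exact fun b => hF (π b)
  | succ k ih =>
      intro v
      refine congr (funext fun b => ?_) (ih (hF (π v)))
      show F (π b + π v) - F (π b) = F (π (b + v)) - F (π b)
      rw [hπ]

end DPoly

section Mul

variable {A W : Type*} [AddCommGroup A] [CommRing W]

theorem DPoly.mul : ∀ (j k : ℕ) (F G : A → W), DPoly j F → DPoly k G →
    DPoly (j + k) (fun a => F a * G a)
  | 0, k, F, G, hF, hG =>
      DPoly.congr (funext fun a => by rw [hF a, zero_mul])
        (DPoly.zero_fun (0 + k))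
  | (j+1), 0, F, G, hF, hG =>
      DPoly.congr (funext fun a => by rw [hG a, mul_zero])
        (DPoly.zero_fun (j + 1 + 0))
  | (j+1), (k+1), F, G, hF, hG => by
      show ∀ v : A, DPoly (j + 1 + k) _
      intro v
      have h1 : DPoly (j + 1 + k) (fun a => F (a + v) * (G (a + v) - G a)) :=
        DPoly.mul (j+1) k _ _ (hF.shift v) (hG v)
      have h2 : DPoly (j + 1 + k) (fun a => (F (a + v) - F a) * G a) :=
        (DPoly.mul j (k+1) _ _ (hF v) hG).of_le (by omega)
      refine DPoly.congr (funext fun a => ?_) (h1.add h2)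
      show F (a + v) * (G (a + v) - G a) + (F (a + v) - F a) * G a
          = F (a + v) * G (a + v) - F a * G a
      ring

end Mul


section Cyclic

variable (p s n : ℕ)

abbrev Vsp := (ZMod (p ^ s) → ZMod (p ^ n))

noncomputable def tau : Module.End ℤ (Vsp p s n) where
  toFun u := fun a => u (a + 1)
  map_add' _ _ := rfl
  map_smul' _ _ := rfl

theorem tau_pow_apply : ∀ (c : ℕ) (u : Vsp p s n) (a : ZMod (p ^ s)),
    ((tau p s n) ^ c) u a = u (a + (c : ZMod (p ^ s)))
  | 0, u, a => by simp
  | (c+1), u, a => by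
      rw [pow_succ]
      have h1 : ((tau p s n) ^ c * (tau p s n)) u a
          = ((tau p s n) ^ c) ((tau p s n) u) a := rfl
      rw [h1, tau_pow_apply c]
      show u (a + c + 1) = u (a + (c + 1 : ℕ))
      push_cast
      rw [add_assoc]

theorem tau_pow_card : (tau p s n) ^ (p ^ s) = 1 := by
  apply LinearMap.ext
  intro u
  funext a
  rw [tau_pow_apply]
  simp [ZMod.natCast_self]

/-- `δ = τ - 1` raised to the power `p^s * n` vanishes. -/
theorem delta_pow_eq_zero (hp : p.Prime) :
    ((tau p s n) - 1) ^ (p ^ s * n) = 0 := by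
  set E := Module.End ℤ (Vsp p s n) with hE
  set δ : E := (tau p s n) - 1 with hδ
  obtain ⟨t, ht⟩ : ∃ t, p ^ s = t + 1 := by
    refine ⟨p ^ s - 1, ?_⟩
    have : 1 ≤ p ^ s := Nat.one_le_pow _ _ hp.pos
    omega
  have hbin : (1 : E) = ∑ i ∈ Finset.range (p ^ s + 1), δ ^ i * ((p ^ s).choose i : E) := by
    have h1 : (δ + 1) ^ (p ^ s)
        = ∑ i ∈ Finset.range (p ^ s + 1), δ ^ i * 1 ^ (p ^ s - i) * ((p ^ s).choose i : E) :=
      (Commute.one_right δ).add_pow (p ^ s)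
    have h2 : δ + 1 = tau p s n := by rw [hδ]; abel
    rw [h2, tau_pow_card] at h1
    simpa using h1
  have hsum : ∑ i ∈ Finset.range (p ^ s), δ ^ (i + 1) * (((p ^ s).choose (i + 1) : ℕ) : E)
      = 0 := by
    rw [Finset.sum_range_succ'] at hbin
    simp only [pow_zero, Nat.choose_zero_right, Nat.cast_one, one_mul] at hbin
    exact add_eq_right.mp hbin.symm
  have hdP : ∃ ρ : E, δ ^ (p ^ s) = p • ρ := by
    refine ⟨-∑ i ∈ Finset.range t, δ ^ (i + 1) * ((((p ^ s).choose (i + 1)) / p : ℕ) : E), ?_⟩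
    have hrange : Finset.range (p ^ s) = Finset.range (t + 1) := by rw [ht]
    rw [hrange, Finset.sum_range_succ] at hsum
    have hc : (p ^ s).choose (t + 1) = 1 := by rw [← ht, Nat.choose_self]
    rw [hc] at hsum
    simp only [Nat.cast_one, mul_one] at hsum
    rw [← ht] at hsum
    have hPeq := eq_neg_of_add_eq_zero_right hsum
    rw [hPeq, smul_neg, Finset.smul_sum]
    congr 1
    refine Finset.sum_congr rfl fun i hi => ?_
    have hdvd : p ∣ (p ^ s).choose (i + 1) := by
      refine hp.dvd_choose_pow (by omega) ?_
      have : i < t := Finset.mem_range.mp hi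
      omega
    rw [nsmul_eq_mul]
    rw [show (((p ^ s).choose (i + 1) : ℕ) : E) = (p : E) * ((((p ^ s).choose (i + 1)) / p : ℕ) : E) by
      rw [← Nat.cast_mul, Nat.mul_div_cancel' hdvd]]
    rw [← mul_assoc, ← (Nat.cast_commute p (δ ^ (i + 1))).eq, mul_assoc]
  obtain ⟨ρ, hρ⟩ := hdP
  have hpow : δ ^ (p ^ s * n) = (p ^ n : ℕ) • ρ ^ n := by
    rw [pow_mul, hρ, smul_pow]
  have hzero : ((p ^ n : ℕ) • ρ ^ n : E) = 0 := by
    apply LinearMap.ext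
    intro u
    funext a
    show (p ^ n : ℕ) • ((ρ ^ n) u a) = (0 : ZMod (p ^ n))
    rw [nsmul_eq_mul, ZMod.natCast_self, zero_mul]
  rw [hpow, hzero]

end Cyclic

section CyclicDPoly

variable {p s n : ℕ}

theorem dpoly_claim (hp : p.Prime) :
    ∀ (k j : ℕ), p ^ s * n ≤ j + k → ∀ (γ : Module.End ℤ (Vsp p s n)) (u : Vsp p s n),
      DPoly k (((((tau p s n) - 1) ^ j) * γ) u)
  | 0, j, hj, γ, u => by
      have hz : ((tau p s n) - 1) ^ j = 0 := by
        rw [show j = p ^ s * n + (j - p ^ s * n) by omega, pow_add,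
          delta_pow_eq_zero p s n hp, zero_mul]
      intro a
      rw [hz, zero_mul]
      simp
  | (k+1), j, hj, γ, u => by
      intro v
      haveI : NeZero (p ^ s) := ⟨pow_ne_zero s hp.ne_zero⟩
      set δ : Module.End ℤ (Vsp p s n) := (tau p s n) - 1 with hδdef
      set geom : Module.End ℤ (Vsp p s n) := ∑ i ∈ Finset.range v.val, (tau p s n) ^ i
        with hgeomdef
      have hgeom : (tau p s n) ^ v.val - 1 = geom * δ := (geom_sum_mul (tau p s n) v.val).symm
      have hcd : Commute δ geom := by
        refine Commute.sum_right _ _ _ fun i _ => ?_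
        exact ((Commute.refl (tau p s n)).sub_left (Commute.one_left _)).pow_right i
      have hsw : δ ^ (j + 1) * geom = geom * δ ^ (j + 1) := ((hcd.pow_left (j+1))).eq
      have hop : geom * δ * (δ ^ j * γ) = δ ^ (j + 1) * (geom * γ) := by
        calc geom * δ * (δ ^ j * γ) = geom * δ ^ (j + 1) * γ := by
              rw [pow_succ']; noncomm_ring
          _ = δ ^ (j + 1) * (geom * γ) := by rw [← hsw, mul_assoc]
      have hval : ((v.val : ℕ) : ZMod (p ^ s)) = v := ZMod.natCast_rightInverse v
      have heq : (fun a => ((δ ^ j * γ) u) (a + v) - ((δ ^ j * γ) u) a)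
          = ((δ ^ (j + 1) * (geom * γ)) u) := by
        funext a
        have h1 : ((δ ^ j * γ) u) (a + v) = (((tau p s n) ^ v.val) ((δ ^ j * γ) u)) a := by
          rw [tau_pow_apply, hval]
        rw [h1]
        have h2 : (((tau p s n) ^ v.val) ((δ ^ j * γ) u)) a - ((δ ^ j * γ) u) a
            = ((((tau p s n) ^ v.val - 1) * (δ ^ j * γ)) u) a := rfl
        rw [h2, hgeom, hop]
      exact DPoly.congr heq.symm (dpoly_claim hp k (j + 1) (by omega) (geom * γ) u)

theorem dpoly_cyclic (hp : p.Prime) (u : ZMod (p ^ s) → ZMod (p ^ n)) :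
    DPoly (p ^ s * n) u := by
  have h := dpoly_claim hp (p ^ s * n) 0 (by omega) 1 u
  refine DPoly.congr ?_ h
  rw [pow_zero, one_mul]
  rfl

theorem dpoly_pi (hp : p.Prime) : ∀ (m : ℕ) (F : (Fin m → ZMod (p ^ s)) → ZMod (p ^ n)),
    DPoly (m * (p ^ s * n) + 1) F
  | 0, F => by
      intro v
      refine DPoly.congr (funext fun a => ?_) (DPoly.zero_fun (0 * (p ^ s * n)))
      show (0 : ZMod (p ^ n)) = F (a + v) - F a
      rw [Subsingleton.elim (a + v) a, sub_self]
  | (m+1), F => by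
      classical
      haveI : NeZero (p ^ s) := ⟨pow_ne_zero s hp.ne_zero⟩
      have hrep : F = fun x => ∑ c ∈ (Finset.univ : Finset (ZMod (p ^ s))),
          (if x (Fin.last m) = c then (1 : ZMod (p ^ n)) else 0)
            * F (Fin.snoc (Fin.init x) c) := by
        funext x
        have h0 : ∀ b ∈ (Finset.univ : Finset (ZMod (p ^ s))), b ≠ x (Fin.last m) →
            (if x (Fin.last m) = b then (1 : ZMod (p ^ n)) else 0)
              * F (Fin.snoc (Fin.init x) b) = 0 := by
          intro b _ hb
          rw [if_neg (fun h => hb h.symm), zero_mul]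
        have h1 : x (Fin.last m) ∉ (Finset.univ : Finset (ZMod (p ^ s))) →
            (if x (Fin.last m) = x (Fin.last m) then (1 : ZMod (p ^ n)) else 0)
              * F (Fin.snoc (Fin.init x) (x (Fin.last m))) = 0 :=
          fun h => absurd (Finset.mem_univ _) h
        rw [Finset.sum_eq_single (x (Fin.last m)) h0 h1, if_pos rfl, one_mul,
          Fin.snoc_init_self]
      rw [hrep]
      refine DPoly.sum _ fun c _ => ?_
      have h1 : DPoly (p ^ s * n)
          (fun x : Fin (m+1) → ZMod (p ^ s) =>
            (if x (Fin.last m) = c then (1 : ZMod (p ^ n)) else 0)) :=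
        DPoly.comp_addHom (π := fun x : Fin (m+1) → ZMod (p ^ s) => x (Fin.last m))
          (fun _ _ => rfl) (dpoly_cyclic hp (fun t => if t = c then 1 else 0))
      have h2 : DPoly (m * (p ^ s * n) + 1)
          (fun x : Fin (m+1) → ZMod (p ^ s) => F (Fin.snoc (Fin.init x) c)) :=
        DPoly.comp_addHom (π := fun x : Fin (m+1) → ZMod (p ^ s) => Fin.init x)
          (fun _ _ => rfl) (dpoly_pi hp m (fun y => F (Fin.snoc y c)))
      exact (DPoly.mul _ _ _ _ h1 h2).of_le (Nat.le_of_eq (by ring))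

end CyclicDPoly

open MeasureTheory in
/-- Almost-everywhere "additive polynomial of degree `< k`" predicate. -/
def APoly {G X W : Type*} [MeasurableSpace X] [AddCommGroup W]
    (T : G → X → X) (μ : Measure X) : ℕ → (X → W) → Prop
  | 0, c => ∀ᵐ x ∂μ, c x = 0
  | (k + 1), c => ∀ g : G, APoly T μ k (fun x => c (T g x) - c x)

section APolyLemmas

open MeasureTheory Filter

variable {G X : Type*} [AddCommGroup G] [MeasurableSpace X]
  {T : G → X → X} {μ : Measure X}

theorem ae_comp_T (hT : ∀ g, MeasurePreserving (T g) μ μ) {W : Type*} {c c' : X → W}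
    (h : c =ᵐ[μ] c') (g : G) :
    (fun x => c (T g x)) =ᵐ[μ] (fun x => c' (T g x)) :=
  h.comp_tendsto (hT g).quasiMeasurePreserving.tendsto_ae

variable {W : Type*} [AddCommGroup W]

set_option linter.unusedSectionVars false

theorem apoly_congr (hT : ∀ g, MeasurePreserving (T g) μ μ) {k : ℕ} {c c' : X → W} (h : c =ᵐ[μ] c')
    (hc : APoly T μ k c) : APoly T μ k c' := by
  induction k generalizing c c' with
  | zero =>
      have hc0 : ∀ᵐ x ∂μ, c x = 0 := hc
      show ∀ᵐ x ∂μ, c' x = 0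
      filter_upwards [h, hc0] with x h1 h2
      rw [← h1]; exact h2
  | succ k ih => exact fun g => ih ((ae_comp_T hT h g).sub h) (hc g)

theorem apoly_zero_fun (k : ℕ) : APoly T μ k (fun _ : X => (0 : W)) := by
  induction k with
  | zero => exact ae_of_all _ fun _ => rfl
  | succ k ih =>
      intro g
      have heq : (fun x => (fun _ : X => (0:W)) (T g x) - (fun _ : X => (0:W)) x)
          = fun _ : X => (0 : W) := by funext x; simp
      rw [heq]; exact ih

theorem apoly_const (k : ℕ) (w : W) : APoly T μ (k + 1) (fun _ : X => w) := by
  induction k with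
  | zero =>
      intro g
      exact ae_of_all _ fun x => sub_self w
  | succ k ih =>
      intro g
      have heq : (fun x => (fun _ : X => w) (T g x) - (fun _ : X => w) x)
          = fun _ : X => (0 : W) := by funext x; simp
      rw [heq]; exact apoly_zero_fun (k + 1)

theorem apoly_mono (hT : ∀ g, MeasurePreserving (T g) μ μ) {k : ℕ} {c : X → W} (hc : APoly T μ k c) : APoly T μ (k + 1) c := by
  induction k generalizing c with
  | zero =>
      intro g
      have hc0 : ∀ᵐ x ∂μ, c x = 0 := hc
      show ∀ᵐ x ∂μ, c (T g x) - c x = 0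
      filter_upwards [hc0, ae_comp_T hT hc0 g] with x h1 h2
      rw [h1, h2, sub_zero]
  | succ k ih => exact fun g => ih (hc g)

theorem apoly_of_le (hT : ∀ g, MeasurePreserving (T g) μ μ) {k k' : ℕ} (h : k ≤ k') {c : X → W} (hc : APoly T μ k c) :
    APoly T μ k' c := by
  induction h with
  | refl => exact hc
  | step _ ih => exact apoly_mono hT ih

theorem apoly_add (hT : ∀ g, MeasurePreserving (T g) μ μ) {k : ℕ} {c c' : X → W} (hc : APoly T μ k c) (hc' : APoly T μ k c') :
    APoly T μ k (fun x => c x + c' x) := by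
  induction k generalizing c c' with
  | zero =>
      have h1 : ∀ᵐ x ∂μ, c x = 0 := hc
      have h2 : ∀ᵐ x ∂μ, c' x = 0 := hc'
      show ∀ᵐ x ∂μ, c x + c' x = 0
      filter_upwards [h1, h2] with x h1 h2
      rw [h1, h2, add_zero]
  | succ k ih =>
      intro g
      refine apoly_congr hT (ae_of_all _ fun x => ?_) (ih (hc g) (hc' g))
      show (c (T g x) - c x) + (c' (T g x) - c' x)
          = (fun x => c x + c' x) (T g x) - (fun x => c x + c' x) x
      dsimp only
      abel

theorem apoly_sum (hT : ∀ g, MeasurePreserving (T g) μ μ) {ι : Type*} (s : Finset ι) {k : ℕ} {F : ι → X → W}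
    (h : ∀ i ∈ s, APoly T μ k (F i)) : APoly T μ k (fun x => ∑ i ∈ s, F i x) := by
  classical
  induction s using Finset.induction_on with
  | empty =>
      refine apoly_congr hT (ae_of_all _ fun x => ?_) (apoly_zero_fun k)
      simp
  | @insert i s' hi ih =>
      refine apoly_congr hT (ae_of_all _ fun x => ?_)
        (apoly_add hT (h i (Finset.mem_insert_self i s'))
          (ih fun j hj => h j (Finset.mem_insert_of_mem hj)))
      show F i x + ∑ j ∈ s', F j x = ∑ j ∈ insert i s', F j x
      rw [Finset.sum_insert hi]

theorem apoly_comp_T (hT : ∀ g, MeasurePreserving (T g) μ μ)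
    (hTadd : ∀ g g' : G, T (g + g') = T g ∘ T g') {k : ℕ} {c : X → W} (g : G) (hc : APoly T μ k c) :
    APoly T μ k (fun x => c (T g x)) := by
  induction k generalizing c with
  | zero => exact ae_comp_T hT hc g
  | succ k ih =>
      intro h
      have hcomm : ∀ x, T g (T h x) = T h (T g x) := fun x => by
        have e1 : T g ∘ T h = T h ∘ T g := by rw [← hTadd, ← hTadd, add_comm]
        exact congrFun e1 x
      refine apoly_congr hT (ae_of_all _ fun x => ?_) (ih (hc h))
      show (fun y => c (T h y) - c y) (T g x)
          = (fun x => c (T g x)) (T h x) - (fun x => c (T g x)) x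
      show c (T h (T g x)) - c (T g x) = c (T g (T h x)) - c (T g x)
      rw [hcomm]

end APolyLemmas

section APolyMul

variable {G X : Type*} [AddCommGroup G] [MeasurableSpace X]
  {T : G → X → X} {μ : Measure X} {W : Type*} [CommRing W]

theorem apoly_mul (hT : ∀ g, MeasurePreserving (T g) μ μ)
    (hTadd : ∀ g g' : G, T (g + g') = T g ∘ T g') :
    ∀ (j k : ℕ) (c c' : X → W), APoly T μ j c → APoly T μ k c' →
      APoly T μ (j + k) (fun x => c x * c' x)
  | 0, k, c, c', hc, hc' => by
      refine apoly_of_le hT (Nat.zero_le _) ?_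
      have h1 : ∀ᵐ x ∂μ, c x = 0 := hc
      show ∀ᵐ x ∂μ, c x * c' x = 0
      filter_upwards [h1] with x h1
      rw [h1, zero_mul]
  | (j+1), 0, c, c', hc, hc' => by
      refine apoly_of_le hT (by omega : (0:ℕ) ≤ j + 1 + 0) ?_
      have h1 : ∀ᵐ x ∂μ, c' x = 0 := hc'
      show ∀ᵐ x ∂μ, c x * c' x = 0
      filter_upwards [h1] with x h1
      rw [h1, mul_zero]
  | (j+1), (k+1), c, c', hc, hc' => by
      intro g
      have h1 : APoly T μ (j + 1 + k) (fun x => c (T g x) * (c' (T g x) - c' x)) :=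
        apoly_mul hT hTadd (j+1) k _ _ (apoly_comp_T hT hTadd g hc) (hc' g)
      have h2 : APoly T μ (j + 1 + k) (fun x => (c (T g x) - c x) * c' x) :=
        apoly_of_le hT (by omega) (apoly_mul hT hTadd j (k+1) _ _ (hc g) hc')
      refine apoly_congr hT (ae_of_all _ fun x => ?_) (apoly_add hT h1 h2)
      show c (T g x) * (c' (T g x) - c' x) + (c (T g x) - c x) * c' x
          = (fun x => c x * c' x) (T g x) - (fun x => c x * c' x) x
      show c (T g x) * (c' (T g x) - c' x) + (c (T g x) - c x) * c' x
          = c (T g x) * c' (T g x) - c x * c' x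
      ring

end APolyMul

section QMain

def psiC (R : ℕ) : ℕ → ℕ → ℕ
  | 0, _ => 1
  | (a + 1), c => Nat.rec 1 (fun _ ih => psiC R a R + ih + 1) c

theorem qmain {G X : Type*} [AddCommGroup G] [MeasurableSpace X]
    {T : G → X → X} {μ : Measure X}
    (hT : ∀ g, MeasurePreserving (T g) μ μ)
    (hTadd : ∀ g g' : G, T (g + g') = T g ∘ T g')
    {A : Type*} [AddCommGroup A] [Fintype A] [DecidableEq A]
    {W : Type*} [CommRing W]
    (R : ℕ) (hR : ∀ u : A → W, DPoly R u) :
    ∀ (a c : ℕ) (b : X → A), APoly T μ a b → ∀ (F : A → W), DPoly c F →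
      APoly T μ (psiC R a c) (fun x => F (b x))
  | 0, c, b, hb, F, hF => by
      have hb0 : ∀ᵐ x ∂μ, b x = 0 := hb
      refine apoly_congr hT ?_ (apoly_const 0 (F 0))
      filter_upwards [hb0] with x hx
      show F 0 = F (b x)
      rw [hx]
  | (a+1), 0, b, hb, F, hF => by
      refine apoly_congr hT (ae_of_all _ fun x => ?_) (apoly_zero_fun 1)
      show (0 : W) = F (b x)
      rw [hF (b x)]
  | (a+1), (c+1), b, hb, F, hF => by
      intro g
      show APoly T μ (psiC R a R + psiC R (a+1) c) (fun x => F (b (T g x)) - F (b x))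
      have key : (fun x => F (b (T g x)) - F (b x))
          = fun x => ∑ v ∈ (Finset.univ : Finset A),
              (if b (T g x) - b x = v then (1 : W) else 0) * (F (b x + v) - F (b x)) := by
        funext x
        have h0 : ∀ v ∈ (Finset.univ : Finset A), v ≠ b (T g x) - b x →
            (if b (T g x) - b x = v then (1 : W) else 0) * (F (b x + v) - F (b x)) = 0 := by
          intro v _ hv
          rw [if_neg (fun h => hv h.symm), zero_mul]
        have h1 : (b (T g x) - b x) ∉ (Finset.univ : Finset A) →
            (if b (T g x) - b x = b (T g x) - b x then (1 : W) else 0)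
              * (F (b x + (b (T g x) - b x)) - F (b x)) = 0 :=
          fun h => absurd (Finset.mem_univ _) h
        rw [Finset.sum_eq_single (b (T g x) - b x) h0 h1, if_pos rfl, one_mul,
          add_comm, sub_add_cancel]
      rw [key]
      refine apoly_sum hT Finset.univ fun v _ => ?_
      have e1 : APoly T μ (psiC R a R)
          (fun x => if b (T g x) - b x = v then (1 : W) else 0) :=
        qmain hT hTadd R hR a R (fun x => b (T g x) - b x) (hb g)
          (fun y => if y = v then (1 : W) else 0) (hR _)
      have e2 : APoly T μ (psiC R (a+1) c) (fun x => F (b x + v) - F (b x)) :=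
        qmain hT hTadd R hR (a+1) c b hb (fun y => F (y + v) - F y) (hF v)
      exact apoly_mul hT hTadd _ _ _ _ e1 e2

end QMain

section Bridges

open MeasureTheory

variable {G X : Type*} [AddCommGroup G] [MeasurableSpace X]
  {T : G → X → X} {μ : Measure X}

theorem phasepoly_congr {H : Type*} [CommGroup H]
    (hT : ∀ g, MeasurePreserving (T g) μ μ) {k : ℕ} {φ φ' : X → H}
    (h : φ =ᵐ[μ] φ') (hφ : PhasePoly T μ k φ) : PhasePoly T μ k φ' := by
  induction k generalizing φ φ' with
  | zero =>
      have h0 : ∀ᵐ x ∂μ, φ x = 1 := hφ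
      show ∀ᵐ x ∂μ, φ' x = 1
      filter_upwards [h, h0] with x h1 h2
      rw [← h1]; exact h2
  | succ k ih => exact fun g => ih ((ae_comp_T hT h g).mul h.inv) (hφ g)

variable {W : Type*} [AddCommGroup W]

theorem phasepoly_of_apoly (hT : ∀ g, MeasurePreserving (T g) μ μ)
    (e : W → Circle) (he0 : e 0 = 1) (hadd : ∀ u v, e (u + v) = e u * e v)
    {k : ℕ} {c : X → W} (hc : APoly T μ k c) :
    PhasePoly T μ k (fun x => e (c x)) := by
  have hsub : ∀ u v : W, e (u - v) = e u * (e v)⁻¹ := by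
    intro u v
    have h1 : e (u - v) * e v = e u := by rw [← hadd, sub_add_cancel]
    exact eq_mul_inv_of_mul_eq h1
  induction k generalizing c with
  | zero =>
      have h0 : ∀ᵐ x ∂μ, c x = 0 := hc
      show ∀ᵐ x ∂μ, e (c x) = 1
      filter_upwards [h0] with x hx
      rw [hx]; exact he0
  | succ k ih =>
      intro g
      refine phasepoly_congr hT (ae_of_all _ fun x => ?_) (ih (hc g))
      show e (c (T g x) - c x)
          = (fun x => e (c x)) (T g x) * ((fun x => e (c x)) x)⁻¹
      exact hsub _ _

theorem apoly_of_phasepoly (hT : ∀ g, MeasurePreserving (T g) μ μ)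
    (e : W → Circle) (hinj : Function.Injective e) (he0 : e 0 = 1)
    (hadd : ∀ u v, e (u + v) = e u * e v)
    {k : ℕ} {c : X → W} (hφ : PhasePoly T μ k (fun x => e (c x))) :
    APoly T μ k c := by
  have hsub : ∀ u v : W, e (u - v) = e u * (e v)⁻¹ := by
    intro u v
    have h1 : e (u - v) * e v = e u := by rw [← hadd, sub_add_cancel]
    exact eq_mul_inv_of_mul_eq h1
  induction k generalizing c with
  | zero =>
      have h0 : ∀ᵐ x ∂μ, e (c x) = 1 := hφ
      show ∀ᵐ x ∂μ, c x = 0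
      filter_upwards [h0] with x hx
      exact hinj (hx.trans he0.symm)
  | succ k ih =>
      intro g
      refine ih ?_
      refine phasepoly_congr hT (ae_of_all _ fun x => ?_) (hφ g)
      show (fun x => e (c x)) (T g x) * ((fun x => e (c x)) x)⁻¹
          = e (c (T g x) - c x)
      exact (hsub _ _).symm

theorem apoly_pi (hT : ∀ g, MeasurePreserving (T g) μ μ) {m : ℕ}
    {V : Type*} [AddCommGroup V] {k : ℕ} {b : X → (Fin m → V)}
    (h : ∀ i, APoly T μ k (fun x => b x i)) : APoly T μ k b := by
  induction k generalizing b with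
  | zero =>
      show ∀ᵐ x ∂μ, b x = 0
      have hall : ∀ᵐ x ∂μ, ∀ i, b x i = 0 := ae_all_iff.mpr fun i => h i
      filter_upwards [hall] with x hx
      funext i; exact hx i
  | succ k ih =>
      intro g
      exact ih fun i => h i g

theorem exists_zmod_toCircle (N : ℕ) [NeZero N] (z : Circle) (hz : z ^ N = 1) :
    ∃ k : ZMod N, ZMod.toCircle k = z := by
  have hzc : (z : ℂ) ^ N = 1 := by
    have hpowc : ((z ^ N : Circle) : ℂ) = (z : ℂ) ^ N := map_pow Circle.coeHom z N
    rw [← hpowc, hz, Circle.coe_one]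
  obtain ⟨i, hiN, hi⟩ :=
    (Complex.isPrimitiveRoot_exp N (NeZero.ne N)).eq_pow_of_pow_eq_one hzc
  refine ⟨(i : ZMod N), ?_⟩
  have hcoe : (ZMod.toCircle ((i : ℕ) : ZMod N) : ℂ)
      = Complex.exp (2 * Real.pi * Complex.I * i / N) := ZMod.toCircle_natCast i
  have hpow : Complex.exp (2 * Real.pi * Complex.I / N) ^ i
      = Complex.exp (2 * Real.pi * Complex.I * i / N) := by
    rw [← Complex.exp_nat_mul]
    congr 1
    ring
  apply Subtype.ext
  rw [hcoe, ← hpow, hi]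

end Bridges


/-- For every prime `p` and integers `d, m, n ≥ 1` there is a constant
`C = C(p, d, m, n)` such that: for every ergodic `G`-system `X` with
`G = ⨁_{i∈I} ℤ/q_iℤ` (primes `q_i`, countable `I`), all phase polynomials
`φ₁, …, φ_m : X → S¹` of degree `< d` taking values (a.e.) in the `p^d`-th roots of unity,
and every function `F` of `m` variables from `p^d`-th roots of unity to `p^n`-th roots of
unity, the composite `x ↦ F (φ₁ x, …, φ_m x)` is a phase polynomial of degree `< C`. -/
theorem function_of_phase_polynomials_is_phase_polynomial
    (p d m n : ℕ) (hp : p.Prime) (hd : 1 ≤ d) (hm : 1 ≤ m) (hn : 1 ≤ n) :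
    ∃ C : ℕ,
      ∀ (I : Type) [Countable I] (q : I → ℕ), (∀ i, (q i).Prime) →
      ∀ (X : Type) [MeasurableSpace X] (μ : Measure X) [IsProbabilityMeasure μ]
        (T : (Π₀ i : I, ZMod (q i)) → X → X),
        (∀ g, MeasurePreserving (T g) μ μ) → T 0 = id →
        (∀ g g', T (g + g') = T g ∘ T g') → IsErgodicAction T μ →
      ∀ (φ : Fin m → X → Circle),
        (∀ i, Measurable (φ i)) →
        (∀ i, PhasePoly T μ d (φ i)) →
        (∀ i, ∀ᵐ x ∂μ, φ i x ^ (p ^ d) = 1) →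
      ∀ (F : (Fin m → Circle) → Circle),
        (∀ z : Fin m → Circle, F z ^ (p ^ n) = 1) →
        PhasePoly T μ C (fun x => F (fun i => φ i x)) := by
  classical
  refine ⟨psiC (m * (p ^ d * n) + 1) d (m * (p ^ d * n) + 1), ?_⟩
  intro I _ q hq X _ μ _ T hT hT0 hTadd herg φ hmeas hpoly hval F hF
  haveI : NeZero (p ^ d) := ⟨pow_ne_zero _ hp.ne_zero⟩
  haveI : NeZero (p ^ n) := ⟨pow_ne_zero _ hp.ne_zero⟩
  set R := m * (p ^ d * n) + 1 with hRdef
  let L : Circle → ZMod (p ^ d) := fun z =>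
    if h : ∃ k : ZMod (p ^ d), ZMod.toCircle k = z then h.choose else 0
  have hL : ∀ z : Circle, z ^ (p ^ d) = 1 → ZMod.toCircle (L z) = z := by
    intro z hz
    have hex := exists_zmod_toCircle (p ^ d) z hz
    simp only [L, dif_pos hex]
    exact hex.choose_spec
  let L' : Circle → ZMod (p ^ n) := fun z =>
    if h : ∃ k : ZMod (p ^ n), ZMod.toCircle k = z then h.choose else 0
  have hL' : ∀ z : Circle, z ^ (p ^ n) = 1 → ZMod.toCircle (L' z) = z := by
    intro z hz
    have hex := exists_zmod_toCircle (p ^ n) z hz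
    simp only [L', dif_pos hex]
    exact hex.choose_spec
  set b : X → (Fin m → ZMod (p ^ d)) := fun x i => L (φ i x) with hbdef
  have hbφ : ∀ i, (fun x => ZMod.toCircle (b x i)) =ᵐ[μ] φ i := fun i =>
    (hval i).mono fun x hx => hL _ hx
  have hAb : APoly T μ d b := by
    refine apoly_pi hT fun i => ?_
    refine apoly_of_phasepoly hT (⇑ZMod.toCircle) ZMod.injective_toCircle
      (AddChar.map_zero_eq_one _) (fun u v => AddChar.map_add_eq_mul _ u v) ?_
    exact phasepoly_congr hT (hbφ i).symm (hpoly i)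
  set f : (Fin m → ZMod (p ^ d)) → ZMod (p ^ n) :=
    fun a => L' (F (fun i => ZMod.toCircle (a i))) with hfdef
  have hf : ∀ a, ZMod.toCircle (f a) = F (fun i => ZMod.toCircle (a i)) :=
    fun a => hL' _ (hF _)
  have hfb : APoly T μ (psiC R d R) (fun x => f (b x)) :=
    qmain hT hTadd R (fun u => dpoly_pi hp m u) d R b hAb f (dpoly_pi hp m f)
  have hphase : PhasePoly T μ (psiC R d R) (fun x => ZMod.toCircle (f (b x))) :=
    phasepoly_of_apoly hT (⇑ZMod.toCircle) (AddChar.map_zero_eq_one _)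
      (fun u v => AddChar.map_add_eq_mul _ u v) hfb
  refine phasepoly_congr hT ?_ hphase
  have hall : ∀ᵐ x ∂μ, ∀ i, ZMod.toCircle (b x i) = φ i x := ae_all_iff.mpr fun i => hbφ i
  filter_upwards [hall] with x hx
  show ZMod.toCircle (f (b x)) = F fun i => φ i x
  rw [hf (b x)]
  congr 1
  funext i
  exact hx i
end

section
/- Let P be an infinite set of primes and let G = ⨁_{p∈P} ℤ/pℤ act on the circle S¹, equipped with its Haar probability measure, by T_g z = φ(g)·z, where φ((g_p)_{p∈P}) = ∏_{p∈P} e^{2πi g_p / p} (a finite product since g_p = 0 for all but finitely many p). Then every measurable F : S¹ → S¹ which is a phase polynomial of degree < m for some m ≥ 1 with respect to this action has the form F(z) = c · z^n for μ-a.e. z, for some constant c ∈ S¹ and some integer n; in particular every such F is a phase polynomial of degree < 2. -/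
open MeasureTheory
open scoped symmDiff

namespace PPAux

notation "e₁" => AddCircle.toCircle (T := (1:ℝ))

instance : Fact ((0:ℝ) < 1) := ⟨one_pos⟩

lemma c1 (n : ℤ) : Continuous fun z : Circle => z ^ n := continuous_zpow n
lemma c2 : Continuous (fun z : Circle => (z : ℂ)) := continuous_subtype_val
lemma c3 (n : ℤ) : Continuous fun z : Circle => ((z ^ n : Circle) : ℂ) := c2.comp (c1 n)
lemma mcoe : Measurable (fun z : Circle => (z : ℂ)) := by exact Continuous.measurable c2
lemma m3 (n : ℤ) : Measurable fun z : Circle => ((z ^ n : Circle) : ℂ) := (c3 n).measurable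

lemma coe_zpow (z : Circle) (n : ℤ) : ((z ^ n : Circle) : ℂ) = (z:ℂ) ^ n := by
  cases n with
  | ofNat k => norm_cast
  | negSucc k => norm_cast

lemma e_meas : Measurable e₁ := AddCircle.continuous_toCircle.measurable

lemma e_surj : Function.Surjective e₁ := by
  intro z
  obtain ⟨x, hx⟩ := (AddCircle.homeomorphCircle (one_ne_zero (α := ℝ))).surjective z
  exact ⟨x, by rwa [AddCircle.homeomorphCircle_apply] at hx⟩

noncomputable def ν : Measure Circle := Measure.map e₁ AddCircle.haarAddCircle

instance : IsProbabilityMeasure ν :=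
  Measure.isProbabilityMeasure_map e_meas.aemeasurable

instance : ν.IsMulLeftInvariant := by
  constructor
  intro β
  obtain ⟨x, rfl⟩ := e_surj β
  unfold ν
  rw [Measure.map_map (by exact measurable_const_mul _) e_meas]
  have : ((e₁ x * ·) ∘ e₁) = e₁ ∘ (x + ·) := by
    funext y; simp [AddCircle.toCircle_add]
  rw [this, ← Measure.map_map e_meas (measurable_const_add _)]
  rw [map_add_left_eq_self]

lemma haar_eq (μ : Measure Circle) [μ.IsHaarMeasure] [IsProbabilityMeasure μ] : μ = ν := by
  let K₀ : TopologicalSpace.PositiveCompacts Circle :=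
    ⟨⟨Set.univ, isCompact_univ⟩, by simp⟩
  rw [Measure.haarMeasure_unique μ K₀, Measure.haarMeasure_unique ν K₀]
  have h1 : μ (K₀ : Set Circle) = 1 := by simp [K₀]
  have h2 : ν (K₀ : Set Circle) = 1 := by simp [K₀]
  rw [h1, h2]

lemma toCircle_zsmul (n : ℤ) (x : AddCircle (1:ℝ)) : e₁ (n • x) = e₁ x ^ n := by
  let M : AddCircle (1:ℝ) →+ Additive Circle :=
    AddMonoidHom.mk' (fun y => Additive.ofMul (e₁ y)) (by intro a b; simp [AddCircle.toCircle_add])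
  have := map_zsmul M n x
  exact congrArg Additive.toMul this

lemma fourier_eq (n : ℤ) (x : AddCircle (1:ℝ)) :
    fourier n x = ((e₁ x ^ n : Circle) : ℂ) := by
  rw [fourier_apply, toCircle_zsmul]

lemma coeff_transfer (f : Circle → ℂ) (hf : Measurable f) (n : ℤ) :
    fourierCoeff (f ∘ e₁) n = ∫ z, ((z ^ (-n) : Circle) : ℂ) * f z ∂ν := by
  rw [fourierCoeff]
  unfold ν
  rw [integral_map e_meas.aemeasurable]
  · congr 1
    funext x
    rw [fourier_eq]
    simp [smul_eq_mul]
  · exact ((m3 (-n)).mul hf).aestronglyMeasurable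

/-- Completeness of Fourier series on the circle. -/
lemma ae_zero_of_coeffs (μ : Measure Circle) [μ.IsHaarMeasure] [IsProbabilityMeasure μ]
    (f : Circle → ℂ) (hf : Measurable f) (C : ℝ) (hb : ∀ z, ‖f z‖ ≤ C)
    (h0 : ∀ n : ℤ, ∫ z, ((z ^ (-n) : Circle) : ℂ) * f z ∂μ = 0) : f =ᵐ[μ] 0 := by
  rw [haar_eq μ] at h0 ⊢
  set g : AddCircle (1:ℝ) → ℂ := f ∘ e₁ with hg
  have hgm : Measurable g := hf.comp e_meas
  have hmem : MemLp g 2 AddCircle.haarAddCircle := by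
    refine MemLp.mono_exponent ?_ (le_top)
    exact memLp_top_of_bound hgm.aestronglyMeasurable C (Filter.Eventually.of_forall fun x => hb _)
  have hrepr : ∀ n : ℤ, fourierCoeff g n = 0 := fun n => by
    rw [coeff_transfer f hf n]; exact h0 n
  have hG : hmem.toLp g = 0 := by
    rw [← LinearIsometryEquiv.map_eq_zero_iff (fourierBasis (T := (1:ℝ))).repr]
    ext n
    rw [fourierBasis_repr]
    have : fourierCoeff (⇑(hmem.toLp g)) n = fourierCoeff g n := by
      unfold fourierCoeff
      apply integral_congr_ae
      filter_upwards [hmem.coeFn_toLp] with x hx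
      rw [hx]
    rw [this, hrepr n]
    rfl
  have hg0 : g =ᵐ[AddCircle.haarAddCircle] 0 :=
    (hmem.coeFn_toLp.symm.trans (by rw [hG]; exact Lp.coeFn_zero _ _ _))
  unfold ν
  have : ∀ᵐ z ∂(Measure.map e₁ AddCircle.haarAddCircle), f z = 0 := by
    rw [ae_map_iff e_meas.aemeasurable (by exact hf (measurableSet_singleton 0) : MeasurableSet {z : Circle | f z = 0})]
    filter_upwards [hg0] with x hx using hx
  exact this


lemma exp_zpow (t : ℝ) (n : ℤ) : Circle.exp t ^ n = Circle.exp (n * t) := by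
  have := map_zsmul Circle.expHom n t
  simpa [Circle.expHom, zsmul_eq_mul] using this.symm

lemma exp_pow (t : ℝ) (n : ℕ) : Circle.exp t ^ n = Circle.exp ((n : ℝ) * t) := by
  have h := exp_zpow t (n : ℤ)
  rw [zpow_natCast] at h
  rw [h]
  norm_num

lemma exp_two_pi : Circle.exp (2 * Real.pi) = 1 := by
  apply Circle.coe_injective
  rw [Circle.coe_exp]
  push_cast
  rw [show ((2:ℂ) * Real.pi) * Complex.I = 2 * Real.pi * Complex.I by ring]
  simpa using Complex.exp_two_pi_mul_I

variable (μ : Measure Circle) [μ.IsHaarMeasure] [IsProbabilityMeasure μ]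

lemma integral_comp_mul_left (β : Circle) (f : Circle → ℂ) :
    ∫ z, f (β * z) ∂μ = ∫ z, f z ∂μ :=
  (measurePreserving_mul_left μ β).integral_comp
    (Homeomorph.mulLeft β).toMeasurableEquiv.measurableEmbedding f

lemma integral_zpow_eq_zero {k : ℤ} (hk : k ≠ 0) :
    ∫ z, ((z ^ k : Circle) : ℂ) ∂μ = 0 := by
  set I := ∫ z, ((z ^ k : Circle) : ℂ) ∂μ with hI
  let β : Circle := Circle.exp (Real.pi / k)
  have hβ : ((β ^ k : Circle) : ℂ) = -1 := by
    rw [show β ^ k = Circle.exp Real.pi by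
      rw [exp_zpow]
      congr 1
      field_simp]
    simp [Circle.coe_exp, Complex.exp_pi_mul_I]
  have h2 : I = ∫ z, (((β * z) ^ k : Circle) : ℂ) ∂μ :=
    (integral_comp_mul_left μ β (fun z => ((z ^ k : Circle) : ℂ))).symm
  have h3 : ∫ z, (((β * z) ^ k : Circle) : ℂ) ∂μ = -I := by
    rw [show (fun z : Circle => (((β * z) ^ k : Circle) : ℂ))
        = fun z : Circle => (-1 : ℂ) * ((z ^ k : Circle) : ℂ) by
      funext z
      rw [mul_zpow]
      push_cast
      rw [← hβ]; rfl]
    rw [integral_const_mul]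
    ring
  have : I = -I := h2.trans h3
  linear_combination this / 2

lemma integrable_of_bdd {f : Circle → ℂ} (hf : Measurable f) (C : ℝ)
    (hb : ∀ z, ‖f z‖ ≤ C) : Integrable f μ := by
  rw [← memLp_one_iff_integrable]
  exact MemLp.mono_exponent
    (memLp_top_of_bound hf.aestronglyMeasurable C (Filter.Eventually.of_forall hb)) le_top

lemma zpow_ae_const {k : ℤ} {w : ℂ} (hw : ‖w‖ = 1)
    (h : ∀ᵐ z ∂μ, ((z ^ k : Circle) : ℂ) = w) : k = 0 := by
  by_contra hk
  have h1 : ∫ z, ((z ^ k : Circle) : ℂ) ∂μ = w := by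
    rw [integral_congr_ae (g := fun _ => w) h, integral_const]
    simp
  rw [integral_zpow_eq_zero μ hk] at h1
  rw [← h1] at hw
  simp at hw

lemma norm_circle_coe (z : Circle) : ‖(z : ℂ)‖ = 1 := by
  exact Circle.norm_coe z

/-- If `F` is a measurable eigenfunction for every rotation in a set `Λ` that generates
"enough" of the circle, then `F z = c * z ^ n` a.e. -/
lemma eigen_conclusion (F : Circle → Circle) (hF : Measurable F)
    (Λ : Set Circle) (hΛ : ∀ k : ℤ, (∀ β ∈ Λ, β ^ k = 1) → k = 0)
    (hc : ∀ β ∈ Λ, ∃ c : Circle, ∀ᵐ z ∂μ, F (β * z) = c * F z) :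
    ∃ (c : Circle) (n : ℤ), ∀ᵐ z ∂μ, F z = c * z ^ n := by
  have hμne : (ae μ).NeBot := ae_neBot.mpr (IsProbabilityMeasure.ne_zero μ)
  set f : Circle → ℂ := fun z => (F z : ℂ) with hf
  have hfm : Measurable f := mcoe.comp hF
  have hfb : ∀ z, ‖f z‖ ≤ 1 := fun z => (norm_circle_coe (F z)).le
  set coeff : ℤ → ℂ := fun k => ∫ z, ((z ^ (-k) : Circle) : ℂ) * f z ∂μ with hcoeff
  -- integrability of the coefficient integrands
  have hintm : ∀ k : ℤ, Measurable fun z => ((z ^ (-k) : Circle) : ℂ) * f z :=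
    fun k => (m3 (-k)).mul hfm
  -- step 1 : some coefficient is nonzero
  have hex : ∃ n₀ : ℤ, coeff n₀ ≠ 0 := by
    by_contra hno
    push_neg at hno
    have h0 : f =ᵐ[μ] 0 := ae_zero_of_coeffs μ f hfm 1 hfb hno
    obtain ⟨z, hz⟩ := h0.exists
    have := hfb z
    rw [hz] at this
    have : ‖f z‖ = 1 := norm_circle_coe (F z)
    rw [hz] at this
    simp at this
  obtain ⟨n₀, hn₀⟩ := hex
  -- step 2 : eigenvalue relation for coefficients
  have hrel : ∀ β ∈ Λ, ∀ c : Circle, (∀ᵐ z ∂μ, F (β * z) = c * F z) →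
      ∀ k : ℤ, coeff k = ((β ^ (-k) : Circle) : ℂ) * (c : ℂ) * coeff k := by
    intro β hβ c hcβ k
    have h1 : coeff k = ∫ z, (((β * z) ^ (-k) : Circle) : ℂ) * f (β * z) ∂μ := by
      rw [hcoeff]
      exact (integral_comp_mul_left μ β (fun z => ((z ^ (-k) : Circle) : ℂ) * f z)).symm
    have h2 : (fun z => (((β * z) ^ (-k) : Circle) : ℂ) * f (β * z))
        =ᵐ[μ] fun z => (((β ^ (-k) : Circle) : ℂ) * (c : ℂ)) * (((z ^ (-k) : Circle) : ℂ) * f z) := by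
      filter_upwards [hcβ] with z hz
      rw [hf]
      simp only
      rw [hz, mul_zpow]
      push_cast
      ring
    calc coeff k = ∫ z, (((β * z) ^ (-k) : Circle) : ℂ) * f (β * z) ∂μ := h1
      _ = (((β ^ (-k) : Circle) : ℂ) * (c : ℂ)) * ∫ z, ((z ^ (-k) : Circle) : ℂ) * f z ∂μ := by
          rw [integral_congr_ae h2, integral_const_mul]
      _ = ((β ^ (-k) : Circle) : ℂ) * (c : ℂ) * coeff k := by rw [hcoeff]
  -- step 3 : other coefficients vanish
  have hvanish : ∀ k : ℤ, k ≠ n₀ → coeff k = 0 := by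
    intro k hk
    by_contra hkne
    have hpow : ∀ β ∈ Λ, β ^ (k - n₀) = 1 := by
      intro β hβ
      obtain ⟨c, hcβ⟩ := hc β hβ
      have e1 := hrel β hβ c hcβ k
      have e2 := hrel β hβ c hcβ n₀
      have f1 : ((β ^ (-k) : Circle) : ℂ) * (c : ℂ) = 1 := by
        rcases mul_eq_zero.mp
            (by linear_combination e1 :
              (1 - ((β ^ (-k) : Circle) : ℂ) * (c : ℂ)) * coeff k = 0) with h | h
        · exact (sub_eq_zero.mp h).symm
        · exact absurd h hkne
      have f2 : ((β ^ (-n₀) : Circle) : ℂ) * (c : ℂ) = 1 := by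
        rcases mul_eq_zero.mp
            (by linear_combination e2 :
              (1 - ((β ^ (-n₀) : Circle) : ℂ) * (c : ℂ)) * coeff n₀ = 0) with h | h
        · exact (sub_eq_zero.mp h).symm
        · exact absurd h hn₀
      have hcoe : ((β ^ (-k) : Circle) : ℂ) = ((β ^ (-n₀) : Circle) : ℂ) :=
        mul_right_cancel₀ (Circle.coe_ne_zero c) (f1.trans f2.symm)
      have hb : β ^ (-k) = β ^ (-n₀) := Circle.coe_injective hcoe
      rw [sub_eq_add_neg, zpow_add, ← hb, ← zpow_add, add_neg_cancel, zpow_zero]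
    exact hk (sub_eq_zero.mp (hΛ (k - n₀) hpow))
  -- step 4 : F z = coeff n₀ * z ^ n₀  a.e.
  set a : ℂ := coeff n₀ with ha
  have hdiff : (fun z : Circle => f z - a * ((z ^ n₀ : Circle) : ℂ)) =ᵐ[μ] 0 := by
    apply ae_zero_of_coeffs μ _ (hfm.sub ((m3 n₀).const_mul a)) (1 + ‖a‖)
    · intro z
      refine (norm_sub_le _ _).trans ?_
      gcongr
      · exact hfb z
      · rw [norm_mul, norm_circle_coe, mul_one]
    · intro k
      have hsplit : ∫ z, ((z ^ (-k) : Circle) : ℂ) * (f z - a * ((z ^ n₀ : Circle) : ℂ)) ∂μ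
          = coeff k - a * ∫ z, ((z ^ (n₀ - k) : Circle) : ℂ) ∂μ := by
        have e1 : (fun z : Circle => ((z ^ (-k) : Circle) : ℂ) * (f z - a * ((z ^ n₀ : Circle) : ℂ)))
            = fun z : Circle => ((z ^ (-k) : Circle) : ℂ) * f z
                - a * ((z ^ (n₀ - k) : Circle) : ℂ) := by
          funext z
          simp only [coe_zpow]
          rw [zpow_sub₀ (Circle.coe_ne_zero z)]
          rw [div_eq_mul_inv, ← zpow_neg]
          ring
        rw [e1, integral_sub (integrable_of_bdd μ (hintm k) 1
              (fun z => by
                rw [norm_mul, norm_circle_coe, one_mul]; exact hfb z))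
            ((integrable_of_bdd μ (m3 (n₀ - k)) 1
              (fun z => (norm_circle_coe _).le)).const_mul a),
          integral_const_mul]
      refine hsplit.trans ?_
      rcases eq_or_ne k n₀ with heq | hkn
      · rw [heq]
        rw [show ∫ z, ((z ^ (n₀ - n₀) : Circle) : ℂ) ∂μ = 1 by simp, mul_one, ← ha, sub_self]
      · rw [hvanish k hkn, integral_zpow_eq_zero μ (sub_ne_zero.mpr (fun h => hkn h.symm))]
        simp
  have hfae : ∀ᵐ z ∂μ, f z = a * ((z ^ n₀ : Circle) : ℂ) := by
    filter_upwards [hdiff] with z hz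
    exact sub_eq_zero.mp (by simpa using hz)
  obtain ⟨z₀, hz₀⟩ := hfae.exists
  have hanorm : ‖a‖ = 1 := by
    have h1 : ‖f z₀‖ = 1 := norm_circle_coe _
    rw [hz₀, norm_mul, norm_circle_coe, mul_one] at h1
    exact h1
  have hmem : a ∈ Submonoid.unitSphere ℂ := by
    show a ∈ Metric.sphere (0:ℂ) 1
    rw [mem_sphere_zero_iff_norm]
    exact hanorm
  refine ⟨⟨a, hmem⟩, n₀, ?_⟩
  filter_upwards [hfae] with z hz
  apply Circle.coe_injective
  exact hz


lemma rotation_deg_zero (β c : Circle) (n : ℤ) (N : ℕ) (hN : 0 < N) (hβ : β ^ N = 1)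
    (F : Circle → Circle)
    (h : ∀ᵐ z ∂μ, F (β * z) = c * z ^ n * F z) : n = 0 := by
  have key : ∀ k : ℕ, ∃ d : Circle, ∀ᵐ z ∂μ, F (β ^ k * z) = d * z ^ ((k:ℤ) * n) * F z := by
    intro k
    induction k with
    | zero => exact ⟨1, by filter_upwards with z using by simp⟩
    | succ k ih =>
      obtain ⟨d, hd⟩ := ih
      have hpull : ∀ᵐ z ∂μ, F (β ^ k * (β * z)) = d * (β * z) ^ ((k:ℤ) * n) * F (β * z) :=
        (measurePreserving_mul_left μ β).quasiMeasurePreserving.ae hd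
      refine ⟨d * β ^ ((k:ℤ) * n) * c, ?_⟩
      filter_upwards [hpull, h] with z h1 h2
      have e : β ^ (k + 1) * z = β ^ k * (β * z) := by
        rw [pow_succ, mul_assoc]
      rw [e, h1, h2]
      rw [show (((k + 1 : ℕ)):ℤ) * n = (k:ℤ) * n + n by push_cast; ring, zpow_add, mul_zpow]
      apply Circle.coe_injective
      push_cast
      ring
  obtain ⟨d, hd⟩ := key N
  rw [hβ] at hd
  have hconst : ∀ᵐ z ∂μ, ((z ^ ((N:ℤ) * n) : Circle) : ℂ) = ((d⁻¹ : Circle) : ℂ) := by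
    filter_upwards [hd] with z h1
    rw [one_mul] at h1
    have h2 : d * z ^ ((N:ℤ) * n) = 1 := (right_eq_mul.mp h1)
    have h3 : d⁻¹ = z ^ ((N:ℤ) * n) := inv_eq_of_mul_eq_one_right h2
    rw [← h3]
  have hNn : (N:ℤ) * n = 0 := zpow_ae_const μ (norm_circle_coe d⁻¹) hconst
  rcases mul_eq_zero.mp hNn with h | h
  · exact absurd h (by exact_mod_cast hN.ne')
  · exact h

/-- Local copy of the problem's `PhasePoly` for development. -/
def PhasePoly' {G X H : Type*} [MeasurableSpace X] [CommGroup H]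
    (T : G → X → X) (μ : Measure X) : ℕ → (X → H) → Prop
  | 0, φ => ∀ᵐ x ∂μ, φ x = 1
  | (k + 1), φ => ∀ g : G, PhasePoly' T μ k (fun x => φ (T g x) * (φ x)⁻¹)

lemma poly_induction {G : Type*} (φ : G → Circle)
    (T : G → Circle → Circle) (hT : ∀ g z, T g z = φ g * z)
    (horder : ∀ g, ∃ N : ℕ, 0 < N ∧ φ g ^ N = 1)
    (hgen : ∀ k : ℤ, (∀ g, φ g ^ k = 1) → k = 0) :
    ∀ m (F : Circle → Circle), Measurable F → PhasePoly' T μ m F →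
      ∃ (c : Circle) (n : ℤ), ∀ᵐ z ∂μ, F z = c * z ^ n := by
  intro m
  induction m with
  | zero =>
    intro F hFm hp
    simp only [PhasePoly'] at hp
    exact ⟨1, 0, by filter_upwards [hp] with z h using by simpa using h⟩
  | succ m ih =>
    intro F hFm hp
    simp only [PhasePoly'] at hp
    have hder : ∀ g, ∃ c : Circle, ∀ᵐ z ∂μ, F (φ g * z) = c * F z := by
      intro g
      have hmeas : Measurable fun z => F (φ g * z) * (F z)⁻¹ :=
        (hFm.comp (measurable_id.const_mul (φ g))).mul hFm.inv
      have hp' : PhasePoly' T μ m (fun z => F (φ g * z) * (F z)⁻¹) := by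
        have heq : (fun z => F (T g z) * (F z)⁻¹) = fun z => F (φ g * z) * (F z)⁻¹ := by
          funext z; rw [hT]
        rw [← heq]; exact hp g
      obtain ⟨c, n, hcn⟩ := ih _ hmeas hp'
      obtain ⟨N, hN, hβN⟩ := horder g
      have hev : ∀ᵐ z ∂μ, F (φ g * z) = c * z ^ n * F z := by
        filter_upwards [hcn] with z h
        calc F (φ g * z) = (F (φ g * z) * (F z)⁻¹) * F z := by group
          _ = c * z ^ n * F z := by rw [h]
      have hn0 : n = 0 := rotation_deg_zero μ (φ g) c n N hN hβN F hev
      refine ⟨c, ?_⟩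
      filter_upwards [hev] with z h
      rw [hn0] at h
      simpa using h
    apply eigen_conclusion μ F hFm (Set.range φ)
    · intro k hk
      exact hgen k (fun g => hk _ ⟨g, rfl⟩)
    · rintro β ⟨g, rfl⟩
      exact hder g


end PPAux


/-- Let `P` be an infinite set of primes and let `G = ⨁_{p∈P} ℤ/pℤ` act
on the circle `S¹` (with Haar probability measure) by `T_g z = φ(g) · z`, where
`φ((g_p)_p) = ∏_p e^{2πi g_p / p}`.  Then every measurable `F : S¹ → S¹` which is a phase
polynomial of degree `< m` for some `m ≥ 1` has the form `F z = c · z ^ n` a.e. for some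
constant `c ∈ S¹` and integer `n`; in particular `F` is a phase polynomial of
degree `< 2`. -/
theorem phase_polynomials_on_circle_system_are_characters
    (P : Set ℕ) (hPinf : P.Infinite) (hPprime : ∀ p ∈ P, Nat.Prime p)
    (μ : Measure Circle) [μ.IsHaarMeasure] [IsProbabilityMeasure μ]
    (φ : (Π₀ p : P, ZMod (p : ℕ)) → Circle)
    (hφ : ∀ g, φ g =
      ∏ p ∈ g.support, Circle.exp (2 * Real.pi * (((g p).val : ℝ) / ((p : ℕ) : ℝ))))
    (T : (Π₀ p : P, ZMod (p : ℕ)) → Circle → Circle)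
    (hT : ∀ g z, T g z = φ g * z)
    (F : Circle → Circle) (hFmeas : Measurable F)
    (m : ℕ) (hm : 1 ≤ m) (hFpoly : PhasePoly T μ m F) :
    (∃ (c : Circle) (n : ℤ), ∀ᵐ z ∂μ, F z = c * z ^ n) ∧ PhasePoly T μ 2 F := by
  classical
  have hPP : ∀ k (F : Circle → Circle), PhasePoly T μ k F ↔ PPAux.PhasePoly' T μ k F := by
    intro k
    induction k with
    | zero => intro F; simp only [PhasePoly, PPAux.PhasePoly']
    | succ k ihk =>
      intro F
      simp only [PhasePoly, PPAux.PhasePoly']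
      exact forall_congr' fun g => ihk _
  -- order of every φ g is finite
  have horder : ∀ g, ∃ N : ℕ, 0 < N ∧ φ g ^ N = 1 := by
    intro g
    refine ⟨∏ p ∈ g.support, (p : ℕ),
      Finset.prod_pos (fun p _ => (hPprime p p.2).pos), ?_⟩
    rw [hφ g, ← Finset.prod_pow]
    apply Finset.prod_eq_one
    intro p hp
    obtain ⟨t, ht⟩ := Finset.dvd_prod_of_mem (fun q : P => (q : ℕ)) hp
    have hppos : (0:ℝ) < ((p:ℕ):ℝ) := by exact_mod_cast (hPprime p p.2).pos
    rw [ht, pow_mul, PPAux.exp_pow]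
    rw [show ((p:ℕ):ℝ) * (2 * Real.pi * (((g p).val : ℝ) / ((p:ℕ):ℝ)))
        = ((g p).val : ℝ) * (2 * Real.pi) by field_simp]
    rw [← PPAux.exp_pow, PPAux.exp_two_pi, one_pow, one_pow]
  -- no nonzero integer kills all φ g
  have hgen : ∀ k : ℤ, (∀ g, φ g ^ k = 1) → k = 0 := by
    intro k hk
    by_contra hkne
    obtain ⟨p, hpP, hpk⟩ := hPinf.exists_gt (k.natAbs)
    have hp : Nat.Prime p := hPprime p hpP
    haveI : Fact (1 < p) := ⟨hp.one_lt⟩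
    set pp : P := ⟨p, hpP⟩ with hpp
    set g : Π₀ q : P, ZMod (q:ℕ) := DFinsupp.single pp 1 with hg
    have hne : (1 : ZMod ((pp : ℕ))) ≠ 0 := one_ne_zero
    have hval : φ g = Circle.exp (2 * Real.pi * (1 / (p:ℝ))) := by
      rw [hφ]
      have hsupp : g.support = {pp} := by
        rw [hg]; exact DFinsupp.support_single_ne_zero hne
      rw [hsupp, Finset.prod_singleton]
      congr 1
      have : g pp = 1 := by rw [hg]; exact DFinsupp.single_eq_same
      rw [this, ZMod.val_one]
      simp [hpp]
    have h1 := hk g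
    rw [hval, PPAux.exp_zpow] at h1
    have h2 := congrArg (fun z : Circle => (z : ℂ)) h1
    simp only [Circle.coe_exp, Circle.coe_one] at h2
    rw [Complex.exp_eq_one_iff] at h2
    obtain ⟨m, hm⟩ := h2
    have hppos : (0:ℝ) < (p:ℝ) := by exact_mod_cast hp.pos
    have hm' : ((k:ℝ) * (2 * Real.pi * (1 / (p:ℝ)))) = (m:ℝ) * (2 * Real.pi) := by
      have h5 : (((k:ℝ) * (2 * Real.pi * (1 / (p:ℝ))) : ℝ) : ℂ)
          = (((m:ℝ) * (2 * Real.pi) : ℝ) : ℂ) := by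
        apply mul_right_cancel₀ Complex.I_ne_zero
        push_cast
        push_cast at hm
        linear_combination hm
      exact_mod_cast h5
    have h2pi : (2:ℝ) * Real.pi ≠ 0 := by positivity
    have h3 : ((k:ℝ)/(p:ℝ)) * (2*Real.pi) = (m:ℝ) * (2*Real.pi) := by
      rw [← hm']; ring
    have h4 : (k:ℝ)/(p:ℝ) = (m:ℝ) := mul_right_cancel₀ h2pi h3
    have hkm : (k:ℝ) = (m:ℝ) * (p:ℝ) := (div_eq_iff (ne_of_gt hppos)).mp h4
    have hk2 : k = m * p := by exact_mod_cast hkm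
    rcases eq_or_ne m 0 with rfl | hm0
    · simp at hk2; exact hkne hk2
    · have : p ≤ k.natAbs := by
        rw [hk2]
        rw [Int.natAbs_mul]
        calc p = 1 * p := (one_mul p).symm
          _ ≤ m.natAbs * (p:ℤ).natAbs := by
              apply Nat.mul_le_mul
              · exact Nat.one_le_iff_ne_zero.mpr (Int.natAbs_ne_zero.mpr hm0)
              · simp
      omega
  constructor
  · exact PPAux.poly_induction μ φ T hT horder hgen m F hFmeas ((hPP m F).mp hFpoly)
  · obtain ⟨c, n, hae⟩ :=
      PPAux.poly_induction μ φ T hT horder hgen m F hFmeas ((hPP m F).mp hFpoly)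
    simp only [PhasePoly]
    intro g h
    have pull : ∀ β : Circle, ∀ᵐ z ∂μ, F (β * z) = c * (β * z) ^ n := fun β =>
      (measurePreserving_mul_left μ β).quasiMeasurePreserving.ae hae
    filter_upwards [hae, pull (φ h), pull (φ g), pull (φ g * φ h)] with z e1 e2 e3 e4
    simp only [hT]
    rw [show φ g * (φ h * z) = (φ g * φ h) * z from (mul_assoc _ _ _).symm]
    rw [e4, e2, e3, e1]
    apply Circle.coe_injective
    have c0 : (c:ℂ) ≠ 0 := Circle.coe_ne_zero c
    have z0 : ∀ w : Circle, ((w:ℂ)) ^ n ≠ 0 := fun w => zpow_ne_zero n (Circle.coe_ne_zero w)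
    push_cast [PPAux.coe_zpow, mul_zpow]
    have h1 := z0 (φ g)
    have h2 := z0 (φ h)
    have h3 := z0 z
    field_simp
end

section
/- Let P be an infinite set of primes and let G = ⨁_{p∈P} ℤ/pℤ act on the circle S¹, equipped with its Haar probability measure μ, by T_g z = φ(g)·z, where φ((g_p)_{p∈P}) = ∏_{p∈P} e^{2πi g_p / p} (a finite product since g_p = 0 for all but finitely many p). Then this action is ergodic: every measurable set A ⊆ S¹ satisfying μ(T_g⁻¹A Δ A) = 0 for all g ∈ G has μ(A) ∈ {0, 1}. -/
open MeasureTheory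
open scoped symmDiff
open scoped Pointwise

/-- Let `P` be an infinite set of primes and let `G = ⨁_{p∈P} ℤ/pℤ` act
on the circle `S¹` (with Haar probability measure `μ`) by `T_g z = φ(g) · z`, where
`φ((g_p)_p) = ∏_p e^{2πi g_p / p}`.  Then this action is ergodic: every measurable set
`A ⊆ S¹` with `μ (T_g⁻¹ A ∆ A) = 0` for all `g` has `μ A ∈ {0, 1}`. -/
theorem circle_system_is_ergodic
    (P : Set ℕ) (hPinf : P.Infinite) (hPprime : ∀ p ∈ P, Nat.Prime p)
    (μ : Measure Circle) [μ.IsHaarMeasure] [IsProbabilityMeasure μ]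
    (φ : (Π₀ p : P, ZMod (p : ℕ)) → Circle)
    (hφ : ∀ g, φ g =
      ∏ p ∈ g.support, Circle.exp (2 * Real.pi * (((g p).val : ℝ) / ((p : ℕ) : ℝ))))
    (T : (Π₀ p : P, ZMod (p : ℕ)) → Circle → Circle)
    (hT : ∀ g z, T g z = φ g * z) :
    IsErgodicAction T μ := by
  set_option maxHeartbeats 1000000 in
  classical
  intro A hA hAinv
  haveI : Fact (0 < 2 * Real.pi) := ⟨Real.two_pi_pos⟩
  set π := Real.pi
  set e : AddCircle (2*π) ≃ₜ Circle := AddCircle.homeomorphCircle'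
  have he : ∀ u x, e (u + x) = e u * e x := fun u x => Real.Angle.toCircle_add u x
  have heR : ∀ x : ℝ, e x = Circle.exp x := fun x => rfl
  -- ν := pushforward of volume is a Haar measure on Circle
  set ν : Measure Circle := Measure.map e volume with hν
  haveI hinv : ν.IsMulLeftInvariant := by
    constructor
    intro c
    have hm : Measurable (fun x : Circle => c * x) := (continuous_mul_left c).measurable
    have h1 : Measure.map (c * ·) ν = Measure.map ((fun x => e (e.symm c + x))) volume := by
      rw [hν, Measure.map_map hm e.measurable]
      congr 1
      ext x
      simp only [Function.comp_apply, he, e.apply_symm_apply]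
    have h2 : (fun x => e (e.symm c + x)) = e ∘ (fun x => e.symm c + x) := rfl
    rw [h1, h2, ← Measure.map_map e.measurable (measurable_const_add _),
      map_add_left_eq_self volume (e.symm c)]
  haveI hfin : IsFiniteMeasure ν := by
    constructor
    rw [hν, Measure.map_apply e.measurable MeasurableSet.univ]
    simp
    exact ENNReal.mul_lt_top (by simp) ENNReal.ofReal_lt_top
  haveI hpos : ν.IsOpenPosMeasure := by
    constructor
    intro U hU hne
    rw [hν, Measure.map_apply e.measurable hU.measurableSet]
    exact ((hU.preimage e.continuous).measure_pos volume (hne.preimage e.surjective)).ne'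
  haveI hHaar : ν.IsHaarMeasure := ⟨⟩
  -- ν and μ have the same null measurable sets
  have hnull : ∀ D : Set Circle, MeasurableSet D → (ν D = 0 ↔ μ D = 0) := by
    have h := Measure.isMulLeftInvariant_eq_smul ν μ
    have hc0 : Measure.haarScalarFactor ν μ ≠ 0 :=
      (Measure.haarScalarFactor_pos_of_isHaarMeasure ν μ).ne'
    intro D hD
    rw [h]
    rw [Measure.smul_apply, ENNReal.smul_def, smul_eq_mul, mul_eq_zero, ENNReal.coe_eq_zero]
    simp only [hc0, false_or]
  -- translate to AddCircle
  set s : Set (AddCircle (2*π)) := e ⁻¹' A with hs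
  have hsm : MeasurableSet s := hA.preimage e.measurable
  have hvol : ∀ D : Set Circle, MeasurableSet D → volume (e ⁻¹' D) = ν D := fun D hD =>
    (Measure.map_apply e.measurable hD).symm
  -- the rotation elements
  haveI : Nonempty P := hPinf.nonempty.to_subtype
  set u : P → AddCircle (2*π) := fun p => ((-(2*π)/((p:ℕ):ℝ) : ℝ) : AddCircle (2*π)) with hu
  set g : P → (Π₀ p : P, ZMod (p : ℕ)) := fun p => DFinsupp.single p 1 with hg
  have hφg : ∀ p : P, φ (g p) = Circle.exp (2 * π / ((p:ℕ):ℝ)) := by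
    intro p
    haveI : Fact (1 < (p : ℕ)) := ⟨(hPprime p p.2).one_lt⟩
    rw [hg, hφ, DFinsupp.support_single_ne_zero (one_ne_zero), Finset.prod_singleton]
    simp only [DFinsupp.single_eq_same, ZMod.val_one, Nat.cast_one, mul_one_div]
  have hu₁ : ∀ p : P, (u p +ᵥ s : Set _) =ᵐ[volume] s := by
    intro p
    rw [← measure_symmDiff_eq_zero_iff]
    have hset : (u p +ᵥ s : Set _) = e ⁻¹' (T (g p) ⁻¹' A) := by
      ext x
      rw [Set.mem_vadd_set_iff_neg_vadd_mem]
      have hneg : -(u p) + x = ((2*π/((p:ℕ):ℝ) : ℝ) : AddCircle (2*π)) + x := by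
        rw [hu]
        simp [neg_div, AddCircle.coe_neg, neg_neg]
      simp only [vadd_eq_add, hneg, hs, Set.mem_preimage, he, heR, hT, hφg]
    rw [hset, ← Set.preimage_symmDiff]
    have hDm : MeasurableSet ((T (g p) ⁻¹' A) ∆ A) := by
      have : MeasurableSet (T (g p) ⁻¹' A) := by
        have : T (g p) = fun z => φ (g p) * z := funext fun z => hT _ z
        rw [this]
        exact hA.preimage (continuous_mul_left _).measurable
      exact this.symmDiff hA
    rw [hvol _ hDm, hnull _ hDm]
    exact hAinv (g p)
  have hu₂ : Filter.Tendsto (addOrderOf ∘ u) Filter.atTop Filter.atTop := by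
    have ho : ∀ p : P, addOrderOf (u p) = (p : ℕ) := by
      intro p
      have hp : 0 < (p : ℕ) := (hPprime p p.2).pos
      rw [hu]
      simp only [neg_div, AddCircle.coe_neg, addOrderOf_neg]
      exact AddCircle.addOrderOf_period_div hp
    have : (addOrderOf ∘ u) = fun p : P => (p : ℕ) := funext ho
    rw [this]
    refine Filter.tendsto_atTop_atTop.mpr fun b => ?_
    obtain ⟨p, hp, hpb⟩ := hPinf.exists_gt b
    exact ⟨⟨p, hp⟩, fun q hq => le_trans hpb.le (Subtype.coe_le_coe.mpr hq)⟩
  have key := AddCircle.ae_empty_or_univ_of_forall_vadd_ae_eq_self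
    hsm.nullMeasurableSet hu₁ hu₂
  rcases key with h | h
  · left
    rw [← hnull A hA, ← hvol A hA]
    exact ae_eq_empty.mp h
  · right
    have hc : μ Aᶜ = 0 := by
      rw [← hnull _ hA.compl, ← hvol _ hA.compl]
      have h2 : e ⁻¹' Aᶜ = sᶜ := rfl
      rw [h2]
      exact ae_eq_univ.mp h
    have := measure_compl hA (measure_ne_top μ A)
    rw [hc, measure_univ] at this
    exact le_antisymm prob_le_one (tsub_eq_zero_iff_le.mp this.symm)
end
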